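/- arXiv:2502.04062 — 6 statements merged into one kernel-verified Lean document; each statement's English description precedes it below -/
import Mathlib

section
/- If a bounded, continuously differentiable signal w : ℝ≥0 → ℝ^d (with bounded derivative) is not persistently exciting, then for every T > 0 and every ε > 0 there exist a time t > 0 and a unit vector z ∈ ℝ^d such that |zᵀ w(τ)| ≤ ε for all τ ∈ [t, t+T]. -/
open Matrix

noncomputable def gramInt {ι : Type} (w : ℝ → ι → ℝ) (t T : ℝ) : Matrix ι ι ℝ :=
  Matrix.of fun i j => ∫ τ in t..(t + T), w τ i * w τ j

def IsPECT {ι : Type} [Fintype ι] [DecidableEq ι] (w : ℝ → ι → ℝ) : Prop :=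
  ∃ α : ℝ, 0 < α ∧ ∃ T : ℝ, 0 < T ∧ ∀ t : ℝ, 0 ≤ t → (gramInt w t T - α • 1).PosSemidef

lemma gram_herm {d : ℕ} (w : ℝ → Fin d → ℝ) (t S α : ℝ) :
    (gramInt w t S - α • 1).IsHermitian := by
  have h1 : (gramInt w t S).IsHermitian := by
    ext i j
    simp only [gramInt, conjTranspose_apply, Matrix.of_apply, star_trivial]
    exact intervalIntegral.integral_congr fun τ _ => mul_comm _ _
  have h2 : ((α : ℝ) • (1 : Matrix (Fin d) (Fin d) ℝ)).IsHermitian := by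
    ext i j
    simp only [conjTranspose_apply, Matrix.smul_apply, one_apply, star_trivial, smul_eq_mul]
    by_cases h : i = j <;> simp [h, eq_comm]
  exact h1.sub h2

lemma quad_form {d : ℕ} (w : ℝ → Fin d → ℝ) (hc : ∀ i, Continuous fun τ => w τ i)
    (t S : ℝ) (x : Fin d → ℝ) :
    x ⬝ᵥ (gramInt w t S *ᵥ x) = ∫ τ in t..(t + S), (∑ i, x i * w τ i) ^ 2 := by
  have hint : ∀ (i j : Fin d), IntervalIntegrable
      (fun τ => (x i * x j) * (w τ i * w τ j)) MeasureTheory.volume t (t + S) :=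
    fun i j => (continuous_const.mul ((hc i).mul (hc j))).intervalIntegrable _ _
  calc x ⬝ᵥ (gramInt w t S *ᵥ x)
      = ∑ i, ∑ j, (x i * x j) * ∫ τ in t..(t + S), w τ i * w τ j := by
        simp only [dotProduct, mulVec, gramInt, Matrix.of_apply, Finset.mul_sum]
        exact Finset.sum_congr rfl fun i _ => Finset.sum_congr rfl fun j _ => by ring
    _ = ∑ i, ∑ j, ∫ τ in t..(t + S), (x i * x j) * (w τ i * w τ j) := by
        simp [intervalIntegral.integral_const_mul]
    _ = ∫ τ in t..(t + S), ∑ i, ∑ j, (x i * x j) * (w τ i * w τ j) := by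
        rw [intervalIntegral.integral_finset_sum (f := fun i τ => ∑ j, (x i * x j) * (w τ i * w τ j)) (fun i _ =>
          ((continuous_finset_sum _ fun j _ => continuous_const.mul
            ((hc i).mul (hc j))).intervalIntegrable _ _))]
        exact Finset.sum_congr rfl fun i _ =>
          (intervalIntegral.integral_finset_sum (fun j _ => hint i j)).symm
    _ = ∫ τ in t..(t + S), (∑ i, x i * w τ i) ^ 2 := by
        refine intervalIntegral.integral_congr fun τ _ => ?_
        rw [sq, Finset.sum_mul_sum]
        exact Finset.sum_congr rfl fun i _ => Finset.sum_congr rfl fun j _ => by ring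

/-- if a bounded `C¹` signal with bounded derivative is not persistently
exciting, then along some fixed unit direction it is uniformly `ε`-small on arbitrarily
long time intervals. -/
theorem not_pe_small_direction {d : ℕ} (w : ℝ → EuclideanSpace ℝ (Fin d))
    (hsmooth : ContDiff ℝ 1 w)
    (hbdd : ∃ M : ℝ, ∀ t : ℝ, 0 ≤ t → ‖w t‖ ≤ M)
    (hbdd' : ∃ M' : ℝ, ∀ t : ℝ, 0 ≤ t → ‖deriv w t‖ ≤ M')
    (hnPE : ¬ IsPECT (fun s => (w s : Fin d → ℝ))) :
    ∀ T : ℝ, 0 < T → ∀ ε : ℝ, 0 < ε →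
      ∃ t : ℝ, 0 < t ∧ ∃ z : EuclideanSpace ℝ (Fin d), ‖z‖ = 1 ∧
        ∀ τ ∈ Set.Icc t (t + T), |(inner ℝ z (w τ) : ℝ)| ≤ ε := by
  intro T hT ε hε
  obtain ⟨M', hM'⟩ := hbdd'
  set K : ℝ := max M' 1 with hK
  have hK0 : (0:ℝ) < K := lt_of_lt_of_le one_pos (le_max_right _ _)
  set L : ℝ := min (ε / (2 * K)) (T / 2) with hL
  have hL0 : 0 < L := lt_min (by positivity) (by positivity)
  have hLK : K * L ≤ ε / 2 := by
    have h1 : L ≤ ε / (2 * K) := min_le_left _ _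
    calc K * L ≤ K * (ε / (2 * K)) := by nlinarith
      _ = ε / 2 := by field_simp
  have hLT : L ≤ T / 2 := min_le_right _ _
  set α : ℝ := (ε / 2) ^ 2 * L with hα
  have hα0 : 0 < α := by positivity
  -- extract a bad time and direction
  rw [IsPECT] at hnPE
  push_neg at hnPE
  obtain ⟨t, ht0, hnps⟩ := hnPE α hα0 (T + 1) (by linarith)
  rw [Matrix.posSemidef_iff_dotProduct_mulVec] at hnps
  have herm := gram_herm (fun s => (w s : Fin d → ℝ)) t (T + 1) α
  push_neg at hnps
  obtain ⟨x, hx⟩ := hnps herm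
  -- continuity of components
  have hwc : Continuous w := hsmooth.continuous
  have hc : ∀ i, Continuous fun τ => w τ i :=
    fun i => (EuclideanSpace.proj i).continuous.comp hwc
  -- quadratic form
  have hquad : x ⬝ᵥ ((gramInt (fun s => (w s : Fin d → ℝ)) t (T + 1) - α • 1) *ᵥ x)
      = (∫ τ in t..(t + (T + 1)), (∑ i, x i * w τ i) ^ 2) - α * (x ⬝ᵥ x) := by
    rw [Matrix.sub_mulVec, dotProduct_sub, quad_form _ hc, Matrix.smul_mulVec,
      Matrix.one_mulVec, dotProduct_smul, smul_eq_mul]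
  rw [star_trivial, hquad, sub_neg] at hx
  -- x is nonzero
  set v : EuclideanSpace ℝ (Fin d) := WithLp.toLp 2 x with hv
  have hdot : x ⬝ᵥ x = ‖v‖ ^ 2 := by
    rw [← real_inner_self_eq_norm_sq]
    simp only [v, PiLp.inner_apply, PiLp.toLp_apply, RCLike.inner_apply, conj_trivial, dotProduct]
  have hx0 : v ≠ 0 := by
    intro h
    have : x ⬝ᵥ x = 0 := by rw [hdot, h]; simp
    rw [this, mul_zero] at hx
    have hge : 0 ≤ ∫ τ in t..(t + (T + 1)), (∑ i, x i * w τ i) ^ 2 := by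
      apply intervalIntegral.integral_nonneg (by linarith)
      intro u _; positivity
    linarith
  have hnv : 0 < ‖v‖ := norm_pos_iff.mpr hx0
  set z : EuclideanSpace ℝ (Fin d) := ‖v‖⁻¹ • v with hz
  have hz1 : ‖z‖ = 1 := norm_smul_inv_norm hx0
  set f : ℝ → ℝ := fun τ => (inner ℝ z (w τ) : ℝ) with hf
  have hfval : ∀ τ, f τ = ‖v‖⁻¹ * ∑ i, x i * w τ i := by
    intro τ
    have hiv : (inner ℝ v (w τ) : ℝ) = ∑ i, x i * w τ i := by
      simp [PiLp.inner_apply, RCLike.inner_apply, v, mul_comm]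
    simp only [hf, hz]
    rw [real_inner_smul_left, hiv]
  -- the integral of f^2 over the big interval is < α
  have hfint : (∫ τ in t..(t + (T + 1)), f τ ^ 2) < α := by
    have : (fun τ => f τ ^ 2) = fun τ => (‖v‖⁻¹) ^ 2 * (∑ i, x i * w τ i) ^ 2 := by
      funext τ; rw [hfval]; ring
    rw [this, intervalIntegral.integral_const_mul]
    have h2 : (‖v‖⁻¹) ^ 2 * (α * ‖v‖ ^ 2) = α := by
      field_simp
    calc (‖v‖⁻¹) ^ 2 * ∫ τ in t..(t + (T + 1)), (∑ i, x i * w τ i) ^ 2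
        < (‖v‖⁻¹) ^ 2 * (α * (x ⬝ᵥ x)) := by
          apply mul_lt_mul_of_pos_left hx (by positivity)
      _ = α := by rw [hdot]; exact h2
  -- f is K-Lipschitz on [0,∞)
  have hdw : Differentiable ℝ w := hsmooth.differentiable one_ne_zero
  have hfd : ∀ τ : ℝ, HasDerivAt f ((inner ℝ z (deriv w τ)) : ℝ) τ := by
    intro τ
    have h1 : HasDerivAt w (deriv w τ) τ := (hdw τ).hasDerivAt
    have := (innerSL ℝ z).hasFDerivAt.comp_hasDerivAt τ h1
    exact this
  have hlip : ∀ a ∈ Set.Ici (0:ℝ), ∀ b ∈ Set.Ici (0:ℝ), |f b - f a| ≤ K * |b - a| := by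
    intro a ha b hb
    have := Convex.norm_image_sub_le_of_norm_deriv_le (f := f) (C := K) (s := Set.Ici (0:ℝ))
      (fun u _ => (hfd u).differentiableAt)
      (fun u hu => by
        rw [(hfd u).deriv]
        calc ‖(inner ℝ z (deriv w u) : ℝ)‖ ≤ ‖z‖ * ‖deriv w u‖ := norm_inner_le_norm _ _
          _ ≤ 1 * K := by
              apply mul_le_mul (le_of_eq hz1) (le_trans (hM' u hu) (le_max_left _ _))
                (norm_nonneg _) zero_le_one
          _ = K := one_mul K)
      (convex_Ici 0) ha hb
    simpa [Real.norm_eq_abs] using this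
  -- continuity of f
  have hfc : Continuous f := by
    apply Continuous.inner continuous_const hwc
  refine ⟨t + 1, by linarith, z, hz1, ?_⟩
  intro τ₀ hτ₀
  by_contra hcon
  rw [not_le] at hcon
  obtain ⟨hτ₀1, hτ₀2⟩ := hτ₀
  -- choose the subinterval
  obtain ⟨a, ha1, ha2, ha3⟩ : ∃ a : ℝ, t ≤ a ∧ a + L ≤ t + (T + 1) ∧
      ∀ τ ∈ Set.Icc a (a + L), |τ - τ₀| ≤ L := by
    by_cases hcase : τ₀ + L ≤ t + 1 + T
    · exact ⟨τ₀, by linarith, by linarith, fun τ hτ => by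
        rw [abs_le]; exact ⟨by linarith [hτ.1], by linarith [hτ.2]⟩⟩
    · exact ⟨τ₀ - L, by linarith, by linarith, fun τ hτ => by
        rw [abs_le]; exact ⟨by linarith [hτ.1], by linarith [hτ.2]⟩⟩
  -- pointwise lower bound on J
  have hlow : ∀ τ ∈ Set.Icc a (a + L), (ε / 2) ^ 2 ≤ f τ ^ 2 := by
    intro τ hτ
    have hτ0 : (0:ℝ) ≤ τ := by
      have := hτ.1; linarith
    have h1 : |f τ - f τ₀| ≤ K * |τ - τ₀| :=
      hlip τ₀ (by simp only [Set.mem_Ici]; linarith) τ (by simp only [Set.mem_Ici]; linarith)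
    have h2 : K * |τ - τ₀| ≤ K * L := mul_le_mul_of_nonneg_left (ha3 τ hτ) (le_of_lt hK0)
    have h3 : |f τ₀| - |f τ| ≤ |f τ - f τ₀| := by
      rw [abs_sub_comm]; exact abs_sub_abs_le_abs_sub _ _
    have h4 : ε / 2 ≤ |f τ| := by linarith
    calc (ε / 2) ^ 2 ≤ |f τ| ^ 2 := by
          apply pow_le_pow_left₀ (by positivity) h4
      _ = f τ ^ 2 := sq_abs _
  -- integral lower bound
  have hJint : IntervalIntegrable (fun τ => f τ ^ 2) MeasureTheory.volume t (t + (T + 1)) :=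
    ((hfc.pow 2).intervalIntegrable _ _)
  have hJint' : IntervalIntegrable (fun τ => f τ ^ 2) MeasureTheory.volume a (a + L) :=
    ((hfc.pow 2).intervalIntegrable _ _)
  have hge1 : α ≤ ∫ τ in a..(a + L), f τ ^ 2 := by
    have hconst : (∫ _ in a..(a + L), (ε / 2) ^ 2) = (ε / 2) ^ 2 * L := by
      rw [intervalIntegral.integral_const]; simp [smul_eq_mul]; ring
    calc α = (ε / 2) ^ 2 * L := rfl
      _ = ∫ _ in a..(a + L), (ε / 2) ^ 2 := hconst.symm
      _ ≤ ∫ τ in a..(a + L), f τ ^ 2 := by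
          apply intervalIntegral.integral_mono_on (by linarith)
            (intervalIntegrable_const) hJint' hlow
  have hge2 : (∫ τ in a..(a + L), f τ ^ 2) ≤ ∫ τ in t..(t + (T + 1)), f τ ^ 2 := by
    apply intervalIntegral.integral_mono_interval ha1 (by linarith) ha2
      (MeasureTheory.ae_of_all _ (fun u => sq_nonneg _)) hJint
  linarith
end

section
/- Failure of persistency of excitation propagates to the derivative along the same direction: let w : ℝ≥0 → ℝ^d be a smooth signal with bounded first and second derivatives. If w is not persistently exciting, then for every T > 0 and every ε > 0 there exist a time t > 0 and a unit vector z ∈ ℝ^d such that both |zᵀ w(τ)| ≤ ε and |zᵀ ẇ(τ)| ≤ ε hold for all τ ∈ [t, t+T]. -/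
open Matrix

/-- If `f` is `L`-Lipschitz on `[a,b]` and its L² norm on `[a,b]` is very small,
then `f` is uniformly small on `[a,b]`. -/
lemma sup_from_L2 {f : ℝ → ℝ} {a b L ε₀ : ℝ} (hab : a < b) (hL : 0 ≤ L) (hε : 0 < ε₀)
    (hfc : Continuous f)
    (hlip : ∀ x ∈ Set.Icc a b, ∀ y ∈ Set.Icc a b, |f x - f y| ≤ L * |x - y|)
    (hint : (∫ s in a..b, (f s)^2) < min (ε₀/(2*(L+1))) ((b-a)/2) * ε₀^2/4) :
    ∀ τ ∈ Set.Icc a b, |f τ| ≤ ε₀ := by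
  by_contra hcon
  push_neg at hcon
  obtain ⟨τ₀, hτ₀, hbig⟩ := hcon
  set r := min (ε₀/(2*(L+1))) ((b-a)/2) with hrdef
  have hr0 : 0 < r := lt_min (by positivity) (by linarith)
  have hrba : r ≤ (b - a)/2 := min_le_right _ _
  have hrL : L * r ≤ ε₀ / 2 := by
    have h1 : r ≤ ε₀/(2*(L+1)) := min_le_left _ _
    have h2 : (0:ℝ) < 2*(L+1) := by linarith
    have h3 : L * r ≤ L * (ε₀/(2*(L+1))) := mul_le_mul_of_nonneg_left h1 hL
    have h4 : L * (ε₀/(2*(L+1))) ≤ ε₀/2 := by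
      rw [← mul_div_assoc, div_le_div_iff₀ h2 two_pos]
      nlinarith
    linarith
  obtain ⟨c, hc1, hc2, hc3⟩ : ∃ c, a ≤ c ∧ c + r ≤ b ∧ τ₀ ∈ Set.Icc c (c + r) := by
    rcases le_or_gt (τ₀ + r) b with h | h
    · exact ⟨τ₀, hτ₀.1, h, by constructor <;> linarith⟩
    · refine ⟨τ₀ - r, by linarith [hτ₀.2], by linarith [hτ₀.2], by constructor <;> linarith⟩
  have hsub : Set.Icc c (c+r) ⊆ Set.Icc a b := Set.Icc_subset_Icc hc1 hc2
  have hlow : ∀ s ∈ Set.Icc c (c+r), (ε₀/2)^2 ≤ (f s)^2 := by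
    intro s hs
    have h1 : |f s - f τ₀| ≤ L * |s - τ₀| := hlip s (hsub hs) τ₀ (hsub hc3)
    have h2 : |s - τ₀| ≤ r := by
      rw [abs_le]
      constructor <;> linarith [hc3.1, hc3.2, hs.1, hs.2]
    have hLr : L * |s - τ₀| ≤ L * r := mul_le_mul_of_nonneg_left h2 hL
    have h3 : ε₀/2 ≤ |f s| := by
      have h4 := abs_sub_abs_le_abs_sub (f τ₀) (f s)
      rw [abs_sub_comm] at h1
      linarith
    have h5 := mul_self_le_mul_self (by positivity : (0:ℝ) ≤ ε₀/2) h3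
    nlinarith [sq_abs (f s)]
  have hint1 : IntervalIntegrable (fun s => (f s)^2) MeasureTheory.volume a c :=
    ((hfc.pow 2).intervalIntegrable _ _)
  have hint2 : IntervalIntegrable (fun s => (f s)^2) MeasureTheory.volume c (c+r) :=
    ((hfc.pow 2).intervalIntegrable _ _)
  have hint3 : IntervalIntegrable (fun s => (f s)^2) MeasureTheory.volume (c+r) b :=
    ((hfc.pow 2).intervalIntegrable _ _)
  have hsplit : (∫ s in a..c, (f s)^2) + (∫ s in c..(c+r), (f s)^2)
      + (∫ s in (c+r)..b, (f s)^2) = ∫ s in a..b, (f s)^2 := by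
    rw [intervalIntegral.integral_add_adjacent_intervals hint1 hint2,
      intervalIntegral.integral_add_adjacent_intervals (hint1.trans hint2) hint3]
  have hnn1 : 0 ≤ ∫ s in a..c, (f s)^2 :=
    intervalIntegral.integral_nonneg hc1 (fun u _ => sq_nonneg _)
  have hnn3 : 0 ≤ ∫ s in (c+r)..b, (f s)^2 :=
    intervalIntegral.integral_nonneg hc2 (fun u _ => sq_nonneg _)
  have hmid : r * (ε₀/2)^2 ≤ ∫ s in c..(c+r), (f s)^2 := by
    have h := intervalIntegral.integral_mono_on (by linarith : c ≤ c + r)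
      (intervalIntegrable_const) hint2 hlow
    rwa [intervalIntegral.integral_const, smul_eq_mul, add_sub_cancel_left] at h
  have : r * ε₀^2/4 ≤ ∫ s in a..b, (f s)^2 := by nlinarith
  linarith

/-- Landau-type bound: if `|f| ≤ ε₀` and `|f''| ≤ M` on `[a,b]`, then
`|f'(τ)| ≤ 2ε₀/δ + Mδ/2` whenever `[τ, τ+δ] ⊆ [a,b]`. -/
lemma deriv_small {f g g' : ℝ → ℝ} {a b M ε₀ δ : ℝ}
    (hfg : ∀ x, HasDerivAt f (g x) x) (hgg : ∀ x, HasDerivAt g (g' x) x)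
    (hgc : Continuous g) (hg'c : Continuous g')
    (hM : ∀ s ∈ Set.Icc a b, |g' s| ≤ M)
    (hε : ∀ s ∈ Set.Icc a b, |f s| ≤ ε₀)
    (hδ : 0 < δ) {τ : ℝ} (hτa : a ≤ τ) (hτδ : τ + δ ≤ b) :
    |g τ| ≤ 2 * ε₀ / δ + M * δ / 2 := by
  have hIcc : Set.Icc τ (τ+δ) ⊆ Set.Icc a b := Set.Icc_subset_Icc hτa hτδ
  have hgi : IntervalIntegrable g MeasureTheory.volume τ (τ+δ) := hgc.intervalIntegrable _ _
  have hFTC : ∫ s in τ..(τ+δ), g s = f (τ+δ) - f τ :=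
    intervalIntegral.integral_eq_sub_of_hasDerivAt (fun x _ => hfg x) hgi
  have hgs : ∀ s ∈ Set.Icc τ (τ+δ), |g s - g τ| ≤ M * (s - τ) := by
    intro s hs
    have hFTC2 : ∫ u in τ..s, g' u = g s - g τ :=
      intervalIntegral.integral_eq_sub_of_hasDerivAt (fun x _ => hgg x)
        (hg'c.intervalIntegrable _ _)
    rw [← hFTC2]
    have hbnd : ∀ x ∈ Set.uIoc τ s, ‖g' x‖ ≤ M := by
      intro x hx
      rw [Set.uIoc_of_le hs.1] at hx
      rw [Real.norm_eq_abs]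
      exact hM x (hIcc ⟨le_of_lt hx.1, le_trans hx.2 hs.2⟩)
    have h := intervalIntegral.norm_integral_le_of_norm_le_const hbnd
    rw [Real.norm_eq_abs, abs_of_nonneg (by linarith [hs.1] : (0:ℝ) ≤ s - τ)] at h
    exact h
  have hval : ∫ s in τ..(τ+δ), M * (s - τ) = M * δ^2 / 2 := by
    rw [intervalIntegral.integral_const_mul]
    have h := intervalIntegral.integral_comp_sub_right (a := τ) (b := τ + δ) (fun x => x) τ
    simp only [add_sub_cancel_left, sub_self, integral_id] at h
    rw [h]
    ring
  have hmid : |(f (τ+δ) - f τ) - δ * g τ| ≤ M * δ^2 / 2 := by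
    have heq : (f (τ+δ) - f τ) - δ * g τ = ∫ s in τ..(τ+δ), (g s - g τ) := by
      rw [intervalIntegral.integral_sub hgi intervalIntegrable_const, hFTC,
        intervalIntegral.integral_const, smul_eq_mul, add_sub_cancel_left]
    rw [heq]
    have hub : (∫ s in τ..(τ+δ), (g s - g τ)) ≤ ∫ s in τ..(τ+δ), M * (s - τ) :=
      intervalIntegral.integral_mono_on (by linarith)
        ((hgc.sub continuous_const).intervalIntegrable _ _)
        ((continuous_const.mul (continuous_id.sub continuous_const)).intervalIntegrable _ _)
        (fun s hs => (abs_le.mp (hgs s hs)).2)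
    have hlb : (∫ s in τ..(τ+δ), (-(M * (s - τ)))) ≤ ∫ s in τ..(τ+δ), (g s - g τ) :=
      intervalIntegral.integral_mono_on (by linarith)
        (((continuous_const.mul (continuous_id.sub continuous_const)).neg).intervalIntegrable _ _)
        ((hgc.sub continuous_const).intervalIntegrable _ _)
        (fun s hs => (abs_le.mp (hgs s hs)).1)
    have hval2 : (∫ s in τ..(τ+δ), (-(M * (s - τ)))) = -(M * δ^2/2) := by
      rw [intervalIntegral.integral_neg, hval]
    rw [abs_le]
    constructor <;> linarith
  have hfb : |f (τ+δ)| ≤ ε₀ := hε _ ⟨by linarith, hτδ⟩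
  have hfa : |f τ| ≤ ε₀ := hε _ ⟨hτa, by linarith⟩
  have hkey : |δ * g τ| ≤ 2*ε₀ + M * δ^2/2 := by
    have h1 : δ * g τ = (f (τ+δ) - f τ) - ((f (τ+δ) - f τ) - δ * g τ) := by ring
    calc |δ * g τ| = |(f (τ+δ) - f τ) - ((f (τ+δ) - f τ) - δ * g τ)| := by rw [← h1]
      _ ≤ |f (τ+δ) - f τ| + |(f (τ+δ) - f τ) - δ * g τ| := abs_sub _ _
      _ ≤ (|f (τ+δ)| + |f τ|) + M * δ^2/2 := by
          have := abs_sub (f (τ+δ)) (f τ)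
          linarith
      _ ≤ 2*ε₀ + M * δ^2/2 := by linarith
  rw [abs_mul, abs_of_pos hδ] at hkey
  have h2 : |g τ| ≤ (2*ε₀ + M * δ^2/2)/δ := by
    rw [le_div_iff₀ hδ]
    linarith [hkey]
  calc |g τ| ≤ (2*ε₀ + M * δ^2/2)/δ := h2
    _ = 2 * ε₀ / δ + M * δ / 2 := by field_simp

/-- failure of PE propagates to the derivative along the same direction. -/
theorem not_pe_small_direction_deriv {d : ℕ} (w : ℝ → EuclideanSpace ℝ (Fin d))
    (hsmooth : ContDiff ℝ 2 w)
    (hbdd : ∃ M : ℝ, ∀ t : ℝ, 0 ≤ t → ‖w t‖ ≤ M)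
    (hbdd' : ∃ M' : ℝ, ∀ t : ℝ, 0 ≤ t → ‖deriv w t‖ ≤ M')
    (hbdd'' : ∃ M'' : ℝ, ∀ t : ℝ, 0 ≤ t → ‖deriv (deriv w) t‖ ≤ M'')
    (hnPE : ¬ IsPECT (fun s => (w s : Fin d → ℝ))) :
    ∀ T : ℝ, 0 < T → ∀ ε : ℝ, 0 < ε →
      ∃ t : ℝ, 0 < t ∧ ∃ z : EuclideanSpace ℝ (Fin d), ‖z‖ = 1 ∧
        ∀ τ ∈ Set.Icc t (t + T),
          |(inner ℝ z (w τ) : ℝ)| ≤ ε ∧ |(inner ℝ z (deriv w τ) : ℝ)| ≤ ε := by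
  obtain ⟨M', hM'⟩ := hbdd'
  obtain ⟨M'', hM''⟩ := hbdd''
  have hM'0 : 0 ≤ M' := le_trans (norm_nonneg _) (hM' 0 le_rfl)
  have hM''0 : 0 ≤ M'' := le_trans (norm_nonneg _) (hM'' 0 le_rfl)
  -- differentiability facts
  have h21 : ContDiff ℝ ((1:WithTop ℕ∞)+1) w := by
    have : ((1:WithTop ℕ∞)+1) = 2 := by norm_num
    rw [this]; exact hsmooth
  obtain ⟨hwd, -, hdw1⟩ := contDiff_succ_iff_deriv.mp h21
  have hwd2 : Differentiable ℝ (deriv w) := hdw1.differentiable one_ne_zero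
  have hwc : Continuous w := hsmooth.continuous
  have hdwc : Continuous (deriv w) := hsmooth.continuous_deriv (by norm_num)
  have hddwc : Continuous (deriv (deriv w)) := hdw1.continuous_deriv le_rfl
  have hwci : ∀ i : Fin d, Continuous fun τ => w τ i := by
    intro i
    exact (EuclideanSpace.proj i (𝕜 := ℝ)).continuous.comp hwc
  intro T hT ε hε
  -- parameters
  set δ : ℝ := min 1 (ε / (M'' + 1)) with hδdef
  have hδ0 : 0 < δ := lt_min one_pos (div_pos hε (by linarith))
  have hδ1 : δ ≤ 1 := min_le_left _ _
  have hδM : M'' * δ / 2 ≤ ε / 2 := by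
    have h1 : δ ≤ ε / (M'' + 1) := min_le_right _ _
    have h2 : δ * (M''+1) ≤ ε := by
      calc δ * (M''+1) ≤ (ε/(M''+1)) * (M''+1) :=
            mul_le_mul_of_nonneg_right h1 (by linarith)
        _ = ε := div_mul_cancel₀ _ (by linarith)
    nlinarith
  set ε₀ : ℝ := min ε (ε * δ / 4) with hε₀def
  have hε₀0 : 0 < ε₀ := lt_min hε (by positivity)
  have hε₀ε : ε₀ ≤ ε := min_le_left _ _
  have h2ε₀ : 2 * ε₀ / δ ≤ ε / 2 := by
    have h1 : ε₀ ≤ ε * δ / 4 := min_le_right _ _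
    rw [div_le_div_iff₀ hδ0 two_pos]
    nlinarith
  set T' : ℝ := T + 2 with hT'def
  have hT'0 : 0 < T' := by simp only [hT'def]; linarith
  set α : ℝ := min (ε₀/(2*(M'+1))) (T'/2) * ε₀^2/4 with hαdef
  have hα0 : 0 < α := by
    have : 0 < min (ε₀/(2*(M'+1))) (T'/2) := lt_min (by positivity) (by linarith)
    positivity
  -- extract a bad time and direction from the failure of PE
  rw [IsPECT] at hnPE
  push_neg at hnPE
  obtain ⟨t, ht0, hnpsd⟩ := hnPE α hα0 T' hT'0
  have hherm : (gramInt (fun s => (w s : Fin d → ℝ)) t T'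
      - α • (1 : Matrix (Fin d) (Fin d) ℝ)).IsHermitian := by
    have h1 : (gramInt (fun s => (w s : Fin d → ℝ)) t T').IsHermitian := by
      unfold Matrix.IsHermitian
      ext i j
      simp only [conjTranspose_apply, gramInt, Matrix.of_apply, star_trivial]
      exact intervalIntegral.integral_congr (fun τ _ => mul_comm _ _)
    have h2 : ((α • (1 : Matrix (Fin d) (Fin d) ℝ))).IsHermitian := by
      unfold Matrix.IsHermitian
      rw [Matrix.conjTranspose_smul, Matrix.conjTranspose_one]
      simp
    exact h1.sub h2
  obtain ⟨x, hx⟩ : ∃ x : Fin d → ℝ,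
      (star x) ⬝ᵥ ((gramInt (fun s => (w s : Fin d → ℝ)) t T'
        - α • (1 : Matrix (Fin d) (Fin d) ℝ)) *ᵥ x) < 0 := by
    by_contra h
    push_neg at h
    exact hnpsd (Matrix.PosSemidef.of_dotProduct_mulVec_nonneg hherm h)
  have hstar : (star x : Fin d → ℝ) = x := by
    funext i; simp
  rw [hstar, Matrix.sub_mulVec, dotProduct_sub, Matrix.smul_mulVec,
    Matrix.one_mulVec, dotProduct_smul, smul_eq_mul] at hx
  -- rewrite the quadratic form as an integral
  set F : ℝ → ℝ := fun τ => ∑ i, x i * w τ i with hFdef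
  have hFc : Continuous F := by
    apply continuous_finset_sum
    intro i _
    exact continuous_const.mul (hwci i)
  have key : x ⬝ᵥ (gramInt (fun s => (w s : Fin d → ℝ)) t T' *ᵥ x)
      = ∫ τ in t..(t+T'), (F τ)^2 := by
    have h1 : ∀ τ, (F τ)^2 = ∑ i, ∑ j, x i * (w τ i * w τ j * x j) := by
      intro τ
      rw [hFdef, sq, Finset.sum_mul_sum]
      refine Finset.sum_congr rfl fun i _ => Finset.sum_congr rfl fun j _ => by ring
    simp_rw [h1]
    rw [intervalIntegral.integral_finset_sum]
    · refine (Finset.sum_congr rfl fun i _ => ?_).symm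
      rw [intervalIntegral.integral_finset_sum]
      · simp only [dotProduct, Matrix.mulVec, gramInt, Matrix.of_apply,
          Finset.mul_sum]
        refine Finset.sum_congr rfl fun j _ => ?_
        rw [intervalIntegral.integral_const_mul, intervalIntegral.integral_mul_const]
      · intro j _
        exact (continuous_const.mul (((hwci i).mul (hwci j)).mul continuous_const)).intervalIntegrable _ _
    · intro i _
      apply Continuous.intervalIntegrable
      apply continuous_finset_sum
      intro j _
      exact continuous_const.mul (((hwci i).mul (hwci j)).mul continuous_const)
  rw [key] at hx
  have hFint : 0 ≤ ∫ τ in t..(t+T'), (F τ)^2 :=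
    intervalIntegral.integral_nonneg (by linarith) (fun u _ => sq_nonneg _)
  have hxx0 : 0 < x ⬝ᵥ x := by
    by_contra h
    push_neg at h
    nlinarith [mul_nonneg hα0.le (neg_nonneg.mpr h)]
  set x' : EuclideanSpace ℝ (Fin d) := WithLp.toLp 2 x with hx'def
  have hx'0 : x' ≠ 0 := by
    intro h
    have h0 : ∀ i, x i = 0 := fun i => by simpa using congrFun (congrArg WithLp.ofLp h) i
    have hdp : x' ⬝ᵥ x' = 0 := by simp [hx'def, dotProduct, h0]
    linarith
  have hnormsq : ‖x'‖^2 = x' ⬝ᵥ x' := by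
    rw [EuclideanSpace.norm_eq, Real.sq_sqrt (Finset.sum_nonneg fun i _ => sq_nonneg _)]
    simp only [Real.norm_eq_abs, sq_abs]
    exact Finset.sum_congr rfl fun i _ => pow_two (x i)
  have hx'n : 0 < ‖x'‖ := norm_pos_iff.mpr hx'0
  set z : EuclideanSpace ℝ (Fin d) := ‖x'‖⁻¹ • x' with hzdef
  have hz1 : ‖z‖ = 1 := by
    rw [hzdef, norm_smul, norm_inv, norm_norm, inv_mul_cancel₀ hx'n.ne']
  set f : ℝ → ℝ := fun τ => (inner ℝ z (w τ) : ℝ) with hfdef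
  set g : ℝ → ℝ := fun τ => (inner ℝ z (deriv w τ) : ℝ) with hgdef
  set g2 : ℝ → ℝ := fun τ => (inner ℝ z (deriv (deriv w) τ) : ℝ) with hg2def
  have hfg : ∀ τ, HasDerivAt f (g τ) τ := by
    intro τ
    have h := ((innerSL ℝ z).hasFDerivAt (x := w τ)).comp_hasDerivAt τ (hwd τ).hasDerivAt
    simpa [Function.comp_def] using h
  have hgg : ∀ τ, HasDerivAt g (g2 τ) τ := by
    intro τ
    have h := ((innerSL ℝ z).hasFDerivAt
      (x := deriv w τ)).comp_hasDerivAt τ (hwd2 τ).hasDerivAt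
    simpa [Function.comp_def] using h
  have hfc : Continuous f := continuous_const.inner hwc
  have hgc : Continuous g := continuous_const.inner hdwc
  have hg2c : Continuous g2 := continuous_const.inner hddwc
  have hgM : ∀ s ∈ Set.Icc t (t+T'), |g s| ≤ M' := by
    intro s hs
    calc |g s| ≤ ‖z‖ * ‖deriv w s‖ := abs_real_inner_le_norm _ _
      _ = ‖deriv w s‖ := by rw [hz1, one_mul]
      _ ≤ M' := hM' s (le_trans ht0 hs.1)
  have hg2M : ∀ s ∈ Set.Icc t (t+T'), |g2 s| ≤ M'' := by
    intro s hs
    calc |g2 s| ≤ ‖z‖ * ‖deriv (deriv w) s‖ := abs_real_inner_le_norm _ _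
      _ = ‖deriv (deriv w) s‖ := by rw [hz1, one_mul]
      _ ≤ M'' := hM'' s (le_trans ht0 hs.1)
  have hlip : ∀ p ∈ Set.Icc t (t+T'), ∀ q ∈ Set.Icc t (t+T'), |f p - f q| ≤ M' * |p - q| := by
    intro p hp q hq
    have h := Convex.norm_image_sub_le_of_norm_hasDerivWithin_le (f := f) (f' := g)
      (fun y _ => (hfg y).hasDerivWithinAt)
      (fun y hy => by rw [Real.norm_eq_abs]; exact hgM y hy)
      (convex_Icc t (t+T')) hq hp
    simpa [Real.norm_eq_abs] using h
  have hfF : ∀ τ, f τ = ‖x'‖⁻¹ * F τ := by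
    intro τ
    show (inner ℝ z (w τ) : ℝ) = ‖x'‖⁻¹ * F τ
    rw [hzdef, real_inner_smul_left]
    congr 1
    simp [hx'def, hFdef, PiLp.inner_apply, mul_comm]
  have hintf : (∫ s in t..(t+T'), (f s)^2) < α := by
    have h1 : ∀ s, (f s)^2 = ‖x'‖⁻¹^2 * (F s)^2 := fun s => by rw [hfF]; ring
    simp_rw [h1]
    rw [intervalIntegral.integral_const_mul]
    have h2 : (∫ τ in t..(t+T'), (F τ)^2) < α * (x' ⬝ᵥ x') := by linarith
    calc ‖x'‖⁻¹^2 * ∫ τ in t..(t+T'), (F τ)^2 < ‖x'‖⁻¹^2 * (α * (x' ⬝ᵥ x')) := by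
          exact mul_lt_mul_of_pos_left h2 (by positivity)
      _ = α := by
          rw [← hnormsq]
          field_simp
  have hsmall : ∀ τ ∈ Set.Icc t (t+T'), |f τ| ≤ ε₀ := by
    apply sup_from_L2 (by linarith : t < t + T') hM'0 hε₀0 hfc hlip
    rw [show t + T' - t = T' from by ring, ← hαdef]
    exact hintf
  refine ⟨t + 1, by linarith, z, hz1, ?_⟩
  intro τ hτ
  have hτ1 : τ ∈ Set.Icc t (t + T') := ⟨by linarith [hτ.1], by linarith [hτ.2, hT'def]⟩
  constructor
  · exact le_trans (hsmall τ hτ1) hε₀ε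
  · have hb := deriv_small (a := t) (b := t + T') (τ := τ) hfg hgg hgc hg2c hg2M hsmall hδ0
      (by linarith [hτ.1]) (by linarith [hτ.2, hδ1, hT'def])
    calc |(inner ℝ z (deriv w τ) : ℝ)| ≤ 2*ε₀/δ + M''*δ/2 := hb
      _ ≤ ε/2 + ε/2 := by linarith
      _ = ε := by ring
end

section
/- Sufficient condition for PE state trajectories in discrete-time LTI systems: let x_{t+1} = A x_t + B u_t with A ∈ ℝ^{n×n} Schur and (A,B) reachable, u : ℕ → ℝ^m bounded, x_0 ∈ ℝ^n arbitrary. If the stacked shift signal Q^n(u)_t = (u_{t−n+1}, …, u_t) ∈ ℝ^{nm} is persistently exciting, then the state trajectory x is persistently exciting in ℝ^n. -/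
open Matrix

noncomputable def gramSum {ι : Type} [Fintype ι] (w : ℕ → ι → ℝ) (t T : ℕ) :
    Matrix ι ι ℝ :=
  ∑ τ ∈ Finset.Icc t (t + T), Matrix.vecMulVec (w τ) (w τ)

/-- Persistency of excitation of a discrete-time signal. -/
def IsPE {ι : Type} [Fintype ι] [DecidableEq ι] (w : ℕ → ι → ℝ) : Prop :=
  ∃ α : ℝ, 0 < α ∧ ∃ T : ℕ, 0 < T ∧ ∀ t : ℕ, (gramSum w t T - α • 1).PosSemidef

/-- Partial persistency of excitation of degree `D'`: some surjective linear map
makes the signal persistently exciting. -/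
def IsPPE {ι : Type} [Fintype ι] [DecidableEq ι] (w : ℕ → ι → ℝ) (D' : ℕ) : Prop :=
  ∃ P : (ι → ℝ) →ₗ[ℝ] (Fin D' → ℝ), Function.Surjective P ∧ IsPE (fun t => P (w t))

/-- The multi-shift stack `Q^k(w)_t = (w_{t-k+1}, …, w_t)` with zero padding. -/
def Qstack (k : ℕ) {d : ℕ} (w : ℕ → Fin d → ℝ) : ℕ → Fin k × Fin d → ℝ :=
  fun t p => if k - 1 - (p.1 : ℕ) ≤ t then w (t - (k - 1 - (p.1 : ℕ))) p.2 else 0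

/-- `A` is Schur: all complex eigenvalues lie strictly inside the unit disc. -/
def IsSchur {n : ℕ} (A : Matrix (Fin n) (Fin n) ℝ) : Prop :=
  ∀ μ : ℂ, μ ∈ spectrum ℂ (A.map (algebraMap ℝ ℂ)) → ‖μ‖ < 1

/-- Reachability of the pair `(A, B)`: the controllability matrix has full row rank. -/
def IsReachable {n m : ℕ} (A : Matrix (Fin n) (Fin n) ℝ)
    (B : Matrix (Fin n) (Fin m) ℝ) : Prop :=
  (Matrix.of fun (i : Fin n) (p : Fin n × Fin m) =>
    ((A ^ (p.1 : ℕ)) * B) i p.2).rank = n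

/-! ### Auxiliary lemmas for the proof -/

lemma PEaux.sum_mulVec' {ι n m : Type*} [Fintype m] (s : Finset ι) (M : ι → Matrix n m ℝ)
    (v : m → ℝ) : (∑ i ∈ s, M i).mulVec v = ∑ i ∈ s, (M i).mulVec v := by
  ext j
  simp only [Matrix.mulVec, dotProduct, Matrix.sum_apply, Finset.sum_apply,
    Finset.sum_mul]
  rw [Finset.sum_comm]

lemma PEaux.mulVec_sum' {ι n m : Type*} [Fintype m] (s : Finset ι) (M : Matrix n m ℝ)
    (v : ι → m → ℝ) : M.mulVec (∑ i ∈ s, v i) = ∑ i ∈ s, M.mulVec (v i) := by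
  ext j
  simp only [Matrix.mulVec, dotProduct, Finset.sum_apply, Finset.mul_sum]
  rw [Finset.sum_comm]

lemma PEaux.sum_vecMul' {ι n m : Type*} [Fintype n] (s : Finset ι) (M : ι → Matrix n m ℝ)
    (v : n → ℝ) : Matrix.vecMul v (∑ i ∈ s, M i) = ∑ i ∈ s, Matrix.vecMul v (M i) := by
  ext j
  simp only [Matrix.vecMul, dotProduct, Matrix.sum_apply, Finset.sum_apply,
    Finset.mul_sum]
  rw [Finset.sum_comm]

lemma PEaux.vecMul_smul' {n m : Type*} [Fintype n] (c : ℝ) (M : Matrix n m ℝ) (v : n → ℝ) :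
    Matrix.vecMul v (c • M) = c • Matrix.vecMul v M := by
  ext j
  simp only [Matrix.vecMul, dotProduct, Matrix.smul_apply, Pi.smul_apply, smul_eq_mul,
    Finset.mul_sum]
  refine Finset.sum_congr rfl fun i _ => ?_; ring

lemma PEaux.dotProduct_sum' {ι m : Type*} [Fintype m] (s : Finset ι) (y : m → ℝ)
    (v : ι → m → ℝ) : y ⬝ᵥ (∑ i ∈ s, v i) = ∑ i ∈ s, y ⬝ᵥ (v i) := by
  simp only [dotProduct, Finset.sum_apply, Finset.mul_sum]
  rw [Finset.sum_comm]

lemma PEaux.state_formula {n m : ℕ} (A : Matrix (Fin n) (Fin n) ℝ)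
    (B : Matrix (Fin n) (Fin m) ℝ) (u : ℕ → Fin m → ℝ) (x : ℕ → Fin n → ℝ)
    (hdyn : ∀ t : ℕ, x (t + 1) = A.mulVec (x t) + B.mulVec (u t)) :
    ∀ k t, x (t + k) = (A ^ k).mulVec (x t)
      + ∑ i ∈ Finset.range k, ((A ^ (k - 1 - i)) * B).mulVec (u (t + i)) := by
  intro k
  induction k with
  | zero => intro t; simp
  | succ k ih =>
    intro t
    have ht : t + (k+1) = (t + k) + 1 := by ring
    rw [ht, hdyn, ih t, Finset.sum_range_succ, Matrix.mulVec_add]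
    simp only [Nat.add_sub_cancel, Nat.sub_self, pow_zero, Matrix.one_mul]
    rw [add_assoc]
    congr 1
    · rw [Matrix.mulVec_mulVec, ← pow_succ']
    congr 1
    rw [PEaux.mulVec_sum' (Finset.range k) A]
    refine Finset.sum_congr rfl fun i hi => ?_
    rw [Matrix.mulVec_mulVec, ← Matrix.mul_assoc, ← pow_succ']
    have := Finset.mem_range.mp hi
    have h2 : k - 1 - i + 1 = k - i := by omega
    rw [h2]

lemma PEaux.cayley_sum {n : ℕ} (A : Matrix (Fin n) (Fin n) ℝ) :
    ∑ k ∈ Finset.range (n+1), (A.charpoly.coeff k) • A ^ k = 0 := by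
  have hdeg : A.charpoly.natDegree < n + 1 := by
    rw [Matrix.charpoly_natDegree_eq_dim, Fintype.card_fin]; omega
  have := Polynomial.aeval_eq_sum_range' hdeg A
  rw [Matrix.aeval_self_charpoly] at this
  exact this.symm

lemma PEaux.filter_id {n m : ℕ} (A : Matrix (Fin n) (Fin n) ℝ) (B : Matrix (Fin n) (Fin m) ℝ)
    (u : ℕ → Fin m → ℝ) (x : ℕ → Fin n → ℝ)
    (hdyn : ∀ t : ℕ, x (t + 1) = A.mulVec (x t) + B.mulVec (u t)) (t : ℕ) :
    ∑ k ∈ Finset.range (n+1), (A.charpoly.coeff k) • x (t+k)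
      = ∑ s ∈ Finset.range (n+1),
        (∑ k ∈ Finset.Ico (s+1) (n+1), (A.charpoly.coeff k) • ((A ^ (k-1-s)) * B)).mulVec
          (u (t+s)) := by
  have hsf := PEaux.state_formula A B u x hdyn
  calc ∑ k ∈ Finset.range (n+1), (A.charpoly.coeff k) • x (t+k)
      = ∑ k ∈ Finset.range (n+1), ((A.charpoly.coeff k • A ^ k).mulVec (x t)
          + ∑ i ∈ Finset.range k,
            (A.charpoly.coeff k) • ((A ^ (k-1-i)) * B).mulVec (u (t+i))) := by
        refine Finset.sum_congr rfl fun k _ => ?_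
        rw [hsf k t, smul_add, Matrix.smul_mulVec, Finset.smul_sum]
    _ = (∑ k ∈ Finset.range (n+1), A.charpoly.coeff k • A ^ k).mulVec (x t)
          + ∑ k ∈ Finset.range (n+1), ∑ i ∈ Finset.range k,
            (A.charpoly.coeff k) • ((A ^ (k-1-i)) * B).mulVec (u (t+i)) := by
        rw [Finset.sum_add_distrib, PEaux.sum_mulVec']
    _ = ∑ k ∈ Finset.range (n+1), ∑ i ∈ Finset.range k,
            (A.charpoly.coeff k) • ((A ^ (k-1-i)) * B).mulVec (u (t+i)) := by
        rw [PEaux.cayley_sum, Matrix.zero_mulVec, zero_add]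
    _ = ∑ s ∈ Finset.range (n+1), ∑ k ∈ Finset.Ico (s+1) (n+1),
            (A.charpoly.coeff k) • ((A ^ (k-1-s)) * B).mulVec (u (t+s)) := by
        simp_rw [Finset.range_eq_Ico]
        rw [← Finset.sum_Ico_Ico_comm' 0 (n+1)
            (fun s k => (A.charpoly.coeff k) • ((A ^ (k-1-s)) * B).mulVec (u (t+s)))]
    _ = _ := by
        refine Finset.sum_congr rfl fun s _ => ?_
        rw [PEaux.sum_mulVec']
        refine Finset.sum_congr rfl fun k _ => ?_
        rw [Matrix.smul_mulVec]

lemma PEaux.step1 {n m : ℕ} (A : Matrix (Fin n) (Fin n) ℝ) (B : Matrix (Fin n) (Fin m) ℝ)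
    (v : Fin n → ℝ)
    (h : ∀ s, s < n → Matrix.vecMul v
      (∑ k ∈ Finset.Ico (s+1) (n+1), (A.charpoly.coeff k) • ((A ^ (k-1-s)) * B)) = 0) :
    ∀ j, j < n → Matrix.vecMul v ((A ^ j) * B) = 0 := by
  intro j
  induction j using Nat.strong_induction_on with
  | _ j ih =>
    intro hj
    have hs := h (n-1-j) (by omega)
    rw [PEaux.sum_vecMul'] at hs
    rw [Finset.sum_Ico_succ_top (by omega : n-1-j+1 ≤ n), PEaux.vecMul_smul', add_comm] at hs
    have hcn : A.charpoly.coeff n = 1 := by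
      have := (Matrix.charpoly_monic A).coeff_natDegree
      rwa [Matrix.charpoly_natDegree_eq_dim, Fintype.card_fin] at this
    have hzero : ∑ k ∈ Finset.Ico (n-1-j+1) n, Matrix.vecMul v
        ((A.charpoly.coeff k) • ((A ^ (k-1-(n-1-j))) * B)) = 0 := by
      refine Finset.sum_eq_zero fun k hk => ?_
      rw [PEaux.vecMul_smul', ih (k-1-(n-1-j)) (by simp at hk; omega) (by simp at hk; omega)]
      simp
    rw [hzero, add_zero, hcn, one_smul] at hs
    have he : n - 1 - (n-1-j) = j := by omega
    rwa [he] at hs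

lemma PEaux.step2 {n m : ℕ} (A : Matrix (Fin n) (Fin n) ℝ) (B : Matrix (Fin n) (Fin m) ℝ)
    (hAB : IsReachable A B) (v : Fin n → ℝ)
    (h : ∀ j, j < n → Matrix.vecMul v ((A ^ j) * B) = 0) : v = 0 := by
  set C := (Matrix.of fun (i : Fin n) (p : Fin n × Fin m) =>
    ((A ^ (p.1 : ℕ)) * B) i p.2) with hC
  have hvC : Matrix.vecMul v C = 0 := by
    ext p
    have := congrFun (h p.1 p.1.isLt) p.2
    simpa [Matrix.vecMul, dotProduct, hC] using this
  have hrank : Cᵀ.rank = n := by rw [Matrix.rank_transpose]; exact hAB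
  have hker : LinearMap.ker Cᵀ.mulVecLin = ⊥ := by
    have h1 := LinearMap.finrank_range_add_finrank_ker Cᵀ.mulVecLin
    rw [Module.finrank_pi] at h1
    have h2 : Cᵀ.rank = Module.finrank ℝ (LinearMap.range Cᵀ.mulVecLin) := rfl
    rw [← h2, hrank, Fintype.card_fin] at h1
    have h3 : Module.finrank ℝ (LinearMap.ker Cᵀ.mulVecLin) = 0 := by omega
    exact Submodule.finrank_eq_zero.mp h3
  have hv : v ∈ LinearMap.ker Cᵀ.mulVecLin := by
    simp only [LinearMap.mem_ker, Matrix.mulVecLin_apply]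
    rw [Matrix.mulVec_transpose]
    exact hvC
  rw [hker] at hv
  simpa using hv

lemma PEaux.coercive {n : ℕ} {ι : Type*} [Fintype ι] (hn : 0 < n)
    (Φ : (Fin n → ℝ) →ₗ[ℝ] (ι → ℝ)) (hinj : ∀ v, Φ v = 0 → v = 0) :
    ∃ c > 0, ∀ v : Fin n → ℝ, c * (v ⬝ᵥ v) ≤ (Φ v) ⬝ᵥ (Φ v) := by
  have hdotcont : Continuous fun v : Fin n → ℝ => v ⬝ᵥ v := by
    unfold dotProduct
    exact continuous_finset_sum Finset.univ
      (fun i _ => ((continuous_apply i).mul (continuous_apply i)))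
  have hdotcont2 : Continuous fun v : ι → ℝ => v ⬝ᵥ v := by
    unfold dotProduct
    exact continuous_finset_sum Finset.univ
      (fun i _ => ((continuous_apply i).mul (continuous_apply i)))
  have hgcont : Continuous fun v : Fin n → ℝ => (Φ v) ⬝ᵥ (Φ v) := by
    have hΦc : Continuous Φ := Φ.continuous_of_finiteDimensional
    exact hdotcont2.comp hΦc
  set S : Set (Fin n → ℝ) := {v | v ⬝ᵥ v = 1} with hS
  have hclosed : IsClosed S := isClosed_eq hdotcont continuous_const
  have hbdd : Bornology.IsBounded S := by
    rw [Metric.isBounded_iff_subset_closedBall 0]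
    refine ⟨1, fun v hv => ?_⟩
    simp only [Metric.mem_closedBall, dist_zero_right]
    rw [pi_norm_le_iff_of_nonneg (by norm_num)]
    intro i
    rw [Real.norm_eq_abs, abs_le]
    have h1 : v i * v i ≤ 1 := by
      rw [← hv]
      exact Finset.single_le_sum (f := fun j => v j * v j)
        (fun j _ => mul_self_nonneg _) (Finset.mem_univ i)
    constructor <;> nlinarith
  have hcomp : IsCompact S := Metric.isCompact_of_isClosed_isBounded hclosed hbdd
  have hne : S.Nonempty := by
    refine ⟨Pi.single ⟨0, hn⟩ 1, ?_⟩
    simp [hS, dotProduct, Pi.single_apply]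
  obtain ⟨v₀, hv₀S, hmin⟩ := hcomp.exists_isMinOn hne hgcont.continuousOn
  have hv₀ne : v₀ ≠ 0 := by
    intro h0
    rw [h0] at hv₀S
    simp [hS, dotProduct] at hv₀S
  have hΦv₀ : Φ v₀ ≠ 0 := fun h => hv₀ne (hinj v₀ h)
  have hc : 0 < (Φ v₀) ⬝ᵥ (Φ v₀) := by
    rcases Function.ne_iff.mp hΦv₀ with ⟨p, hp⟩
    have : 0 < Φ v₀ p * Φ v₀ p := mul_self_pos.mpr hp
    refine lt_of_lt_of_le this ?_
    exact Finset.single_le_sum (f := fun q => Φ v₀ q * Φ v₀ q)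
      (fun q _ => mul_self_nonneg _) (Finset.mem_univ p)
  refine ⟨(Φ v₀) ⬝ᵥ (Φ v₀), hc, fun v => ?_⟩
  rcases eq_or_ne v 0 with rfl | hv
  · simp
  · have hvv : 0 < v ⬝ᵥ v := by
      rcases Function.ne_iff.mp hv with ⟨i, hi⟩
      have : 0 < v i * v i := mul_self_pos.mpr hi
      refine lt_of_lt_of_le this ?_
      exact Finset.single_le_sum (f := fun j => v j * v j)
        (fun j _ => mul_self_nonneg _) (Finset.mem_univ i)
    set r := Real.sqrt (v ⬝ᵥ v) with hr
    have hrpos : 0 < r := Real.sqrt_pos.mpr hvv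
    have hrsq : r * r = v ⬝ᵥ v := Real.mul_self_sqrt hvv.le
    have hmem : (r⁻¹ • v) ∈ S := by
      simp only [hS, Set.mem_setOf_eq, smul_dotProduct, dotProduct_smul,
        smul_eq_mul]
      rw [← hrsq]
      field_simp
    have hge : Φ v₀ ⬝ᵥ Φ v₀ ≤ Φ (r⁻¹ • v) ⬝ᵥ Φ (r⁻¹ • v) := hmin hmem
    rw [Φ.map_smul] at hge
    simp only [smul_dotProduct, dotProduct_smul, smul_eq_mul] at hge
    have := mul_le_mul_of_nonneg_left hge (by positivity : (0:ℝ) ≤ r * r)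
    calc (Φ v₀) ⬝ᵥ (Φ v₀) * (v ⬝ᵥ v) = (r*r) * ((Φ v₀) ⬝ᵥ (Φ v₀)) := by rw [hrsq]; ring
    _ ≤ (r*r) * (r⁻¹ * (r⁻¹ * ((Φ v) ⬝ᵥ (Φ v)))) := this
    _ = (Φ v) ⬝ᵥ (Φ v) := by field_simp

lemma PEaux.gram_quad {ι : Type} [Fintype ι] (w : ℕ → ι → ℝ) (a T : ℕ) (y : ι → ℝ) :
    y ⬝ᵥ (gramSum w a T).mulVec y = ∑ τ ∈ Finset.Icc a (a+T), (w τ ⬝ᵥ y)^2 := by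
  unfold gramSum
  rw [PEaux.sum_mulVec', PEaux.dotProduct_sum']
  refine Finset.sum_congr rfl fun τ _ => ?_
  have hmv : (Matrix.vecMulVec (w τ) (w τ)).mulVec y = (w τ ⬝ᵥ y) • (w τ) := by
    ext i
    simp only [Matrix.mulVec, dotProduct, Matrix.vecMulVec_apply, Pi.smul_apply,
      smul_eq_mul]
    rw [Finset.sum_mul]
    refine Finset.sum_congr rfl fun j _ => ?_; ring
  rw [hmv, dotProduct_smul]
  have : y ⬝ᵥ w τ = w τ ⬝ᵥ y := dotProduct_comm _ _
  rw [smul_eq_mul, this, sq]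

lemma PEaux.pe_window {ι : Type} [Fintype ι] [DecidableEq ι] {w : ℕ → ι → ℝ} {α : ℝ}
    {a T : ℕ} (h : (gramSum w a T - α • 1).PosSemidef) (z : ι → ℝ) :
    α * (z ⬝ᵥ z) ≤ ∑ τ ∈ Finset.Icc a (a+T), (w τ ⬝ᵥ z)^2 := by
  have h2 := (Matrix.posSemidef_iff_dotProduct_mulVec.mp h).2 z
  rw [Matrix.sub_mulVec, Matrix.smul_mulVec, Matrix.one_mulVec, dotProduct_sub,
    dotProduct_smul] at h2
  simp only [star_trivial, smul_eq_mul] at h2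
  have := PEaux.gram_quad w a T z
  linarith [h2, this.le, this.ge]

/-- sufficient condition for PE state trajectories (discrete time): if
`Q^n(u)` is persistently exciting then the state trajectory is persistently exciting. -/
theorem pe_state_sufficient {n m : ℕ} (A : Matrix (Fin n) (Fin n) ℝ)
    (B : Matrix (Fin n) (Fin m) ℝ) (hA : IsSchur A) (hAB : IsReachable A B)
    (u : ℕ → Fin m → ℝ) (hu : ∃ M : ℝ, ∀ t, ‖u t‖ ≤ M)
    (x : ℕ → Fin n → ℝ) (x0 : Fin n → ℝ) (hx0 : x 0 = x0)
    (hdyn : ∀ t : ℕ, x (t + 1) = A.mulVec (x t) + B.mulVec (u t))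
    (hPEu : IsPE (Qstack n u)) :
    IsPE x := by
  rcases Nat.eq_zero_or_pos n with hn0 | hn
  · -- degenerate case n = 0
    subst hn0
    refine ⟨1, one_pos, 1, one_pos, fun t => ?_⟩
    refine Matrix.posSemidef_iff_dotProduct_mulVec.mpr ⟨?_, ?_⟩
    · ext i j; exact i.elim0
    · intro y
      have : y ⬝ᵥ ((gramSum x t 1 - (1:ℝ) • 1).mulVec y) = 0 := by
        simp [dotProduct]
      simp only [star_trivial]
      rw [this]
  · obtain ⟨α, hα, T, hT, hPSD⟩ := hPEu
    -- the filter coefficients and matrices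
    set c : ℕ → ℝ := fun k => A.charpoly.coeff k with hc
    set Msum : ℕ → Matrix (Fin n) (Fin m) ℝ :=
      fun s => ∑ k ∈ Finset.Ico (s+1) (n+1), (c k) • ((A ^ (k-1-s)) * B) with hMsum
    -- the linear map Φ
    set Φ : (Fin n → ℝ) →ₗ[ℝ] (Fin n × Fin m → ℝ) :=
      { toFun := fun v => fun p => Matrix.vecMul v (Msum p.1) p.2
        map_add' := by
          intro v w; funext p
          show ((v + w) ᵥ* Msum (p.1 : ℕ)) p.2
            = (v ᵥ* Msum (p.1 : ℕ)) p.2 + (w ᵥ* Msum (p.1 : ℕ)) p.2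
          rw [Matrix.add_vecMul]; rfl
        map_smul' := by
          intro r v; funext p
          show ((r • v) ᵥ* Msum (p.1 : ℕ)) p.2 = r • (v ᵥ* Msum (p.1 : ℕ)) p.2
          rw [Matrix.smul_vecMul]; rfl } with hΦ
    have hinj : ∀ v, Φ v = 0 → v = 0 := by
      intro v hv
      refine PEaux.step2 A B hAB v (PEaux.step1 A B v ?_)
      intro s hs
      funext j
      exact congrFun hv (⟨s, hs⟩, j)
    obtain ⟨c₀, hc₀, hcoer⟩ := PEaux.coercive hn Φ hinj
    set P2 : ℝ := ∑ k ∈ Finset.range (n+1), (c k)^2 with hP2def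
    have hcn : c n = 1 := by
      have := (Matrix.charpoly_monic A).coeff_natDegree
      rwa [Matrix.charpoly_natDegree_eq_dim, Fintype.card_fin] at this
    have hP2 : (1:ℝ) ≤ P2 := by
      have : ((c n)^2 : ℝ) ≤ P2 :=
        Finset.single_le_sum (f := fun k => (c k)^2) (fun k _ => sq_nonneg _)
          (Finset.self_mem_range_succ n)
      rw [hcn] at this; linarith
    have hP2pos : (0:ℝ) < P2 := by linarith
    set β : ℝ := α * c₀ / (P2 * (n+1)) with hβdef
    have hβ : 0 < β := by
      apply div_pos (mul_pos hα hc₀)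
      positivity
    refine ⟨β, hβ, T + n, by omega, fun t => ?_⟩
    refine Matrix.posSemidef_iff_dotProduct_mulVec.mpr ⟨?_, ?_⟩
    · -- Hermitian
      have hG : (gramSum x t (T+n)).IsHermitian := by
        unfold Matrix.IsHermitian
        ext i j
        simp only [gramSum, Matrix.conjTranspose_apply, Matrix.sum_apply,
          Matrix.vecMulVec_apply, star_trivial]
        exact Finset.sum_congr rfl fun τ _ => mul_comm _ _
      have h1 : ((β : ℝ) • (1 : Matrix (Fin n) (Fin n) ℝ)).IsHermitian := by
        unfold Matrix.IsHermitian
        ext i j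
        simp only [Matrix.conjTranspose_apply, Matrix.smul_apply, Matrix.one_apply,
          star_trivial, smul_eq_mul]
        by_cases hij : i = j
        · subst hij; simp
        · rw [if_neg hij, if_neg (Ne.symm hij)]
      exact hG.sub h1
    · intro y
      simp only [star_trivial]
      rw [Matrix.sub_mulVec, Matrix.smul_mulVec, Matrix.one_mulVec,
        dotProduct_sub, dotProduct_smul]
      rw [sub_nonneg, smul_eq_mul]
      -- main inequality: β * (y ⬝ᵥ y) ≤ y ⬝ᵥ G x *ᵥ y
      rw [PEaux.gram_quad]
      -- rewrite goal sum over range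
      have hIccR : ∑ τ ∈ Finset.Icc t (t+(T+n)), (x τ ⬝ᵥ y)^2
          = ∑ j ∈ Finset.range (T+n+1), (x (t+j) ⬝ᵥ y)^2 := by
        rw [← Finset.Ico_add_one_right_eq_Icc, Finset.sum_Ico_eq_sum_range]
        have : t + (T+n) + 1 - t = T+n+1 := by omega
        rw [this]
      rw [hIccR]
      set g : ℕ → ℝ := fun j => (x (t+j) ⬝ᵥ y)^2 with hg
      -- step 1: PE of the input stack applied to Φ y
      have hPE := PEaux.pe_window (hPSD (t + (n-1))) (Φ y)
      -- step 2: identify each term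
      have hterm : ∀ σ, Qstack n u ((t+(n-1))+σ) ⬝ᵥ (Φ y)
          = ∑ k ∈ Finset.range (n+1), c k * (x (t+(σ+k)) ⬝ᵥ y) := by
        intro σ
        have hq : ∀ p : Fin n × Fin m,
            Qstack n u ((t+(n-1))+σ) p = u (t + σ + (p.1 : ℕ)) p.2 := by
          intro p
          unfold Qstack
          have hlt : (p.1 : ℕ) < n := p.1.isLt
          rw [if_pos (by omega)]
          congr 1
          omega
        calc Qstack n u ((t+(n-1))+σ) ⬝ᵥ (Φ y)
            = ∑ p : Fin n × Fin m,
              u (t + σ + (p.1 : ℕ)) p.2 * Matrix.vecMul y (Msum p.1) p.2 := by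
              unfold dotProduct
              refine Finset.sum_congr rfl fun p _ => ?_
              rw [hq p]; rfl
          _ = ∑ s : Fin n, y ⬝ᵥ (Msum (s : ℕ)).mulVec (u (t + σ + (s:ℕ))) := by
              rw [Fintype.sum_prod_type]
              refine Finset.sum_congr rfl fun s _ => ?_
              rw [dotProduct_mulVec]
              unfold dotProduct
              refine Finset.sum_congr rfl fun i _ => mul_comm _ _
          _ = ∑ s ∈ Finset.range n, y ⬝ᵥ (Msum s).mulVec (u ((t+σ) + s)) := by
              rw [Finset.sum_range fun s => y ⬝ᵥ (Msum s).mulVec (u ((t+σ) + s))]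
          _ = ∑ s ∈ Finset.range (n+1), y ⬝ᵥ (Msum s).mulVec (u ((t+σ) + s)) := by
              rw [Finset.sum_range_succ]
              have : Msum n = 0 := by
                rw [hMsum]; simp
              rw [this]
              simp
          _ = y ⬝ᵥ ∑ s ∈ Finset.range (n+1), (Msum s).mulVec (u ((t+σ) + s)) := by
              rw [PEaux.dotProduct_sum']
          _ = y ⬝ᵥ ∑ k ∈ Finset.range (n+1), c k • x ((t+σ)+k) := by
              rw [← PEaux.filter_id A B u x hdyn (t+σ)]
          _ = ∑ k ∈ Finset.range (n+1), c k * (x (t+(σ+k)) ⬝ᵥ y) := by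
              rw [PEaux.dotProduct_sum']
              refine Finset.sum_congr rfl fun k _ => ?_
              rw [dotProduct_smul, smul_eq_mul,
                dotProduct_comm, ← add_assoc]
      -- step 3: Cauchy-Schwarz on each term
      have hCS : ∀ σ, (Qstack n u ((t+(n-1))+σ) ⬝ᵥ (Φ y))^2
          ≤ P2 * ∑ k ∈ Finset.range (n+1), g (σ+k) := by
        intro σ
        rw [hterm σ]
        have := Finset.sum_mul_sq_le_sq_mul_sq (Finset.range (n+1)) c
          (fun k => x (t+(σ+k)) ⬝ᵥ y)
        calc (∑ k ∈ Finset.range (n+1), c k * (x (t+(σ+k)) ⬝ᵥ y))^2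
            ≤ (∑ k ∈ Finset.range (n+1), (c k)^2)
              * (∑ k ∈ Finset.range (n+1), (x (t+(σ+k)) ⬝ᵥ y)^2) := this
          _ = P2 * ∑ k ∈ Finset.range (n+1), g (σ+k) := rfl
      -- step 4: reindex PE window sum
      have hwin : ∑ τ ∈ Finset.Icc (t+(n-1)) ((t+(n-1))+T), (Qstack n u τ ⬝ᵥ (Φ y))^2
          = ∑ σ ∈ Finset.range (T+1), (Qstack n u ((t+(n-1))+σ) ⬝ᵥ (Φ y))^2 := by
        rw [← Finset.Ico_add_one_right_eq_Icc, Finset.sum_Ico_eq_sum_range]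
        have : (t+(n-1)) + T + 1 - (t+(n-1)) = T+1 := by omega
        rw [this]
      -- step 5: double sum bound
      have hdouble : ∑ σ ∈ Finset.range (T+1), ∑ k ∈ Finset.range (n+1), g (σ+k)
          ≤ (n+1) * ∑ j ∈ Finset.range (T+n+1), g j := by
        rw [Finset.sum_comm]
        have hinner : ∀ k ∈ Finset.range (n+1),
            ∑ σ ∈ Finset.range (T+1), g (σ+k) ≤ ∑ j ∈ Finset.range (T+n+1), g j := by
          intro k hk
          have hk' : k ≤ n := by
            have := Finset.mem_range.mp hk; omega
          have h1 : ∑ σ ∈ Finset.range (T+1), g (σ+k)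
              = ∑ j ∈ Finset.Ico k (k+(T+1)), g j := by
            rw [Finset.sum_Ico_eq_sum_range]
            have : k + (T+1) - k = T+1 := by omega
            rw [this]
            refine Finset.sum_congr rfl fun σ _ => ?_
            rw [add_comm k σ]
          rw [h1]
          refine Finset.sum_le_sum_of_subset_of_nonneg ?_ (fun j _ _ => sq_nonneg _)
          intro j hj
          rw [Finset.mem_Ico] at hj
          rw [Finset.mem_range]
          omega
        calc ∑ k ∈ Finset.range (n+1), ∑ σ ∈ Finset.range (T+1), g (σ+k)
            ≤ ∑ k ∈ Finset.range (n+1), ∑ j ∈ Finset.range (T+n+1), g j :=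
              Finset.sum_le_sum hinner
          _ = (n+1) * ∑ j ∈ Finset.range (T+n+1), g j := by
              rw [Finset.sum_const, Finset.card_range, nsmul_eq_mul]
              push_cast
              ring
      -- assemble the chain
      have hchain : α * (c₀ * (y ⬝ᵥ y)) ≤ P2 * ((n+1) * ∑ j ∈ Finset.range (T+n+1), g j) := by
        have c1 : α * (c₀ * (y ⬝ᵥ y)) ≤ α * ((Φ y) ⬝ᵥ (Φ y)) :=
          mul_le_mul_of_nonneg_left (hcoer y) hα.le
        have c2 : α * ((Φ y) ⬝ᵥ (Φ y))
            ≤ ∑ σ ∈ Finset.range (T+1), (Qstack n u ((t+(n-1))+σ) ⬝ᵥ (Φ y))^2 := by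
          rw [← hwin]; exact hPE
        have c3 : ∑ σ ∈ Finset.range (T+1), (Qstack n u ((t+(n-1))+σ) ⬝ᵥ (Φ y))^2
            ≤ ∑ σ ∈ Finset.range (T+1), P2 * ∑ k ∈ Finset.range (n+1), g (σ+k) :=
          Finset.sum_le_sum fun σ _ => hCS σ
        have c4 : ∑ σ ∈ Finset.range (T+1), P2 * ∑ k ∈ Finset.range (n+1), g (σ+k)
            = P2 * ∑ σ ∈ Finset.range (T+1), ∑ k ∈ Finset.range (n+1), g (σ+k) := by
          rw [Finset.mul_sum]
        have c5 : P2 * (∑ σ ∈ Finset.range (T+1), ∑ k ∈ Finset.range (n+1), g (σ+k))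
            ≤ P2 * ((n+1) * ∑ j ∈ Finset.range (T+n+1), g j) :=
          mul_le_mul_of_nonneg_left hdouble hP2pos.le
        linarith
      -- conclude
      rw [hβdef, div_mul_eq_mul_div, div_le_iff₀ (by positivity : (0:ℝ) < P2 * (n+1))]
      calc α * c₀ * (y ⬝ᵥ y) = α * (c₀ * (y ⬝ᵥ y)) := by ring
        _ ≤ P2 * ((n+1) * ∑ j ∈ Finset.range (T+n+1), g j) := hchain
        _ = (∑ j ∈ Finset.range (T+n+1), g j) * (P2 * (n+1)) := by ring
end

section
/- A vanishing additive perturbation cannot create persistency of excitation: let v, e : ℕ → ℝ^d be bounded signals with e_t → 0 as t → ∞. If v is not persistently exciting, then v + e is not persistently exciting. -/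
open Matrix

lemma dot_sum_mulVec {ι : Type} [Fintype ι] (s : Finset ℕ) (A : ℕ → Matrix ι ι ℝ)
    (x : ι → ℝ) : x ⬝ᵥ (∑ τ ∈ s, A τ) *ᵥ x = ∑ τ ∈ s, x ⬝ᵥ (A τ) *ᵥ x := by
  classical
  induction s using Finset.induction_on with
  | empty => simp [Matrix.zero_mulVec]
  | insert a s h ih => simp [Finset.sum_insert h, Matrix.add_mulVec, dotProduct_add, ih]

lemma dot_vecMulVec {ι : Type} [Fintype ι] (a x : ι → ℝ) :
    x ⬝ᵥ (vecMulVec a a) *ᵥ x = (a ⬝ᵥ x) ^ 2 := by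
  simp only [Matrix.mulVec, dotProduct, vecMulVec_apply, sq, Finset.sum_mul_sum]
  refine Finset.sum_congr rfl fun i _ => ?_
  rw [Finset.mul_sum]
  exact Finset.sum_congr rfl fun j _ => by ring

lemma quadForm {ι : Type} [Fintype ι] [DecidableEq ι] (w : ℕ → ι → ℝ) (t T : ℕ) (α : ℝ)
    (x : ι → ℝ) :
    x ⬝ᵥ (gramSum w t T - α • 1) *ᵥ x
      = (∑ τ ∈ Finset.Icc t (t + T), (w τ ⬝ᵥ x) ^ 2) - α * ∑ i, x i ^ 2 := by
  rw [Matrix.sub_mulVec, dotProduct_sub]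
  rw [show (gramSum w t T) = ∑ τ ∈ Finset.Icc t (t + T), Matrix.vecMulVec (w τ) (w τ) from rfl]
  rw [dot_sum_mulVec]
  simp only [dot_vecMulVec]
  congr 1
  rw [Matrix.smul_mulVec, Matrix.one_mulVec, dotProduct_smul]
  simp [dotProduct, Finset.mul_sum, sq]

lemma gram_herm_s15 {ι : Type} [Fintype ι] [DecidableEq ι] (w : ℕ → ι → ℝ) (t T : ℕ) (α : ℝ) :
    (gramSum w t T - α • 1).IsHermitian := by
  unfold Matrix.IsHermitian
  ext i j
  simp [gramSum, Matrix.sub_apply, Matrix.sum_apply, vecMulVec_apply, Matrix.one_apply,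
    Matrix.conjTranspose_apply, mul_comm]
  by_cases h : i = j <;> simp [h, eq_comm]

/-- a vanishing additive perturbation cannot create persistency of
excitation. -/
theorem not_pe_add_vanishing {d : ℕ} (v e : ℕ → Fin d → ℝ)
    (hv : ∃ M : ℝ, ∀ t, ‖v t‖ ≤ M) (he : ∃ M : ℝ, ∀ t, ‖e t‖ ≤ M)
    (hlim : Filter.Tendsto e Filter.atTop (nhds 0))
    (hnPE : ¬ IsPE v) :
    ¬ IsPE (fun t => v t + e t) := by
  intro hPE
  obtain ⟨α, hα, T, hT, hG⟩ := hPE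
  set w : ℕ → Fin d → ℝ := fun t => v t + e t with hw
  have hQ : ∀ t (x : Fin d → ℝ),
      α * ∑ i, x i ^ 2 ≤ ∑ τ ∈ Finset.Icc t (t + T), (w τ ⬝ᵥ x) ^ 2 := by
    intro t x
    have h2 := (hG t).dotProduct_mulVec_nonneg x
    rw [star_trivial, quadForm] at h2
    linarith
  set f : ℕ → ℝ := fun τ => ∑ i, (e τ i) ^ 2 with hf
  have hfl : Filter.Tendsto f Filter.atTop (nhds 0) := by
    have hc : Continuous (fun y : Fin d → ℝ => ∑ i, (y i) ^ 2) := by continuity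
    have := (hc.tendsto 0).comp hlim
    simpa [hf, Function.comp_def] using this
  have hε : (0:ℝ) < α / (4 * (T + 1)) := by positivity
  obtain ⟨N, hN⟩ := (Metric.tendsto_atTop.mp hfl _ hε)
  have hNle : ∀ τ, N ≤ τ → f τ ≤ α / (4 * (T + 1)) := by
    intro τ hτ
    have := hN τ hτ
    rw [Real.dist_eq, sub_zero] at this
    exact le_of_lt (lt_of_le_of_lt (le_abs_self _) this)
  apply hnPE
  refine ⟨α / 4, by linarith, N + T, by omega, fun t => ?_⟩
  refine Matrix.PosSemidef.of_dotProduct_mulVec_nonneg (gram_herm_s15 v t (N + T) (α / 4)) fun x => ?_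
  rw [star_trivial, quadForm]
  set X : ℝ := ∑ i, x i ^ 2 with hX
  have hXnn : 0 ≤ X := Finset.sum_nonneg fun i _ => sq_nonneg _
  have hsub : Finset.Icc (t + N) (t + N + T) ⊆ Finset.Icc t (t + (N + T)) := by
    intro a ha
    simp only [Finset.mem_Icc] at ha ⊢
    omega
  have key : ∀ τ ∈ Finset.Icc (t + N) (t + N + T),
      (w τ ⬝ᵥ x) ^ 2 / 2 - α / (4 * (T + 1)) * X ≤ (v τ ⬝ᵥ x) ^ 2 := by
    intro τ hτ
    simp only [Finset.mem_Icc] at hτ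
    have ha : w τ ⬝ᵥ x = v τ ⬝ᵥ x + e τ ⬝ᵥ x := add_dotProduct _ _ _
    have hcs : (e τ ⬝ᵥ x) ^ 2 ≤ f τ * X :=
      Finset.sum_mul_sq_le_sq_mul_sq Finset.univ (e τ) x
    have hfτ : f τ ≤ α / (4 * (T + 1)) := hNle τ (by omega)
    have hfX : f τ * X ≤ α / (4 * (T + 1)) * X := mul_le_mul_of_nonneg_right hfτ hXnn
    rw [ha]
    nlinarith [sq_nonneg (v τ ⬝ᵥ x - e τ ⬝ᵥ x), hcs, hfX]
  have hsum1 : ∑ τ ∈ Finset.Icc (t + N) (t + N + T),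
      ((w τ ⬝ᵥ x) ^ 2 / 2 - α / (4 * (T + 1)) * X)
      ≤ ∑ τ ∈ Finset.Icc (t + N) (t + N + T), (v τ ⬝ᵥ x) ^ 2 :=
    Finset.sum_le_sum key
  have hcard : (Finset.Icc (t + N) (t + N + T)).card = T + 1 := by
    rw [Nat.card_Icc]; omega
  have hQ' := hQ (t + N) x
  rw [show t + N + T = (t + N) + T from rfl] at hsum1
  have hlhs : α / 4 * X ≤ ∑ τ ∈ Finset.Icc (t + N) (t + N + T),
      ((w τ ⬝ᵥ x) ^ 2 / 2 - α / (4 * (T + 1)) * X) := by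
    rw [Finset.sum_sub_distrib, Finset.sum_const, hcard, nsmul_eq_mul]
    have h1 : ∑ τ ∈ Finset.Icc (t + N) (t + N + T), (w τ ⬝ᵥ x) ^ 2 / 2
        = (∑ τ ∈ Finset.Icc (t + N) (t + N + T), (w τ ⬝ᵥ x) ^ 2) / 2 := by
      rw [Finset.sum_div]
    rw [h1]
    have hT1 : (0:ℝ) < (T:ℝ) + 1 := by positivity
    have : (↑(T + 1) : ℝ) * (α / (4 * (T + 1)) * X) = α / 4 * X := by
      push_cast
      field_simp
    rw [this]
    have : α * X / 2 ≤ (∑ τ ∈ Finset.Icc (t + N) (t + N + T), (w τ ⬝ᵥ x) ^ 2) / 2 := by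
      have := hQ'
      linarith
    linarith
  have hsubsum : ∑ τ ∈ Finset.Icc (t + N) (t + N + T), (v τ ⬝ᵥ x) ^ 2
      ≤ ∑ τ ∈ Finset.Icc t (t + (N + T)), (v τ ⬝ᵥ x) ^ 2 :=
    Finset.sum_le_sum_of_subset_of_nonneg hsub fun τ _ _ => sq_nonneg _
  linarith
end

section
/- For a stable linear system, PE of the state trajectory is independent of the initial condition: let x_{t+1} = A x_t + B u_t with A Schur and u bounded, and let x, x' be the trajectories from initial conditions x_0 and x_0' under the same input u. Then x is persistently exciting if and only if x' is persistently exciting. -/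
open Matrix

open Matrix Filter
open scoped Topology ENNReal NNReal

lemma tendsto_pow_norm_zero_of_spectralRadius_lt_one
    {A : Type*} [NormedRing A] [NormedAlgebra ℂ A] [CompleteSpace A] (a : A)
    (h : spectralRadius ℂ a < 1) :
    Tendsto (fun t : ℕ => ‖a ^ t‖) atTop (𝓝 0) := by
  obtain ⟨ρ, hρ1, hρ2⟩ := ENNReal.lt_iff_exists_nnreal_btwn.mp h
  have hgel := spectrum.pow_nnnorm_pow_one_div_tendsto_nhds_spectralRadius a
  have hev : ∀ᶠ t : ℕ in atTop, (‖a ^ t‖₊ : ℝ≥0∞) ^ (1 / (t : ℝ)) < ρ :=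
    hgel.eventually_lt_const hρ1
  have hb : ∀ᶠ t : ℕ in atTop, ‖a ^ t‖ ≤ (ρ : ℝ) ^ t := by
    filter_upwards [hev, eventually_ge_atTop 1] with t ht ht1
    have htpos : (0 : ℝ) < t := by exact_mod_cast ht1
    have h2 : ((‖a ^ t‖₊ : ℝ≥0∞) ^ (1 / (t : ℝ))) ^ (t : ℝ) < (ρ : ℝ≥0∞) ^ (t : ℝ) :=
      ENNReal.rpow_lt_rpow ht htpos
    rw [← ENNReal.rpow_mul, one_div, inv_mul_cancel₀ (ne_of_gt htpos), ENNReal.rpow_one,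
      ENNReal.rpow_natCast] at h2
    have h3 : (‖a ^ t‖₊ : ℝ≥0∞) < ((ρ ^ t : ℝ≥0) : ℝ≥0∞) := by
      rwa [ENNReal.coe_pow]
    have h4 : ‖a ^ t‖₊ ≤ ρ ^ t := (ENNReal.coe_lt_coe.mp h3).le
    calc ‖a ^ t‖ = ((‖a ^ t‖₊ : ℝ)) := rfl
      _ ≤ ((ρ ^ t : ℝ≥0) : ℝ) := by exact_mod_cast h4
      _ = (ρ : ℝ) ^ t := by push_cast; ring
  have hρ2' : (ρ : ℝ) < 1 := by exact_mod_cast hρ2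
  exact squeeze_zero' (Eventually.of_forall fun t => norm_nonneg _) hb
    (tendsto_pow_atTop_nhds_zero_of_lt_one ρ.coe_nonneg hρ2')


section MP
attribute [local instance] Matrix.linftyOpNormedRing Matrix.linftyOpNormedAlgebra
  Matrix.linftyOpNormedAddCommGroup Matrix.linftyOpNormedSpace

lemma schur_pow_entry_tendsto {n : ℕ} (A : Matrix (Fin n) (Fin n) ℝ) (hA : IsSchur A)
    (i j : Fin n) : Tendsto (fun t : ℕ => (A ^ t) i j) atTop (𝓝 0) := by
  haveI : Nonempty (Fin n) := ⟨i⟩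
  haveI : Nontrivial (Matrix (Fin n) (Fin n) ℂ) :=
    ⟨0, 1, fun h => one_ne_zero (α := ℂ) (by
      have := congrFun (congrFun h i) i
      simpa using this.symm)⟩
  haveI : CompleteSpace (Matrix (Fin n) (Fin n) ℂ) := FiniteDimensional.complete ℂ _
  set M : Matrix (Fin n) (Fin n) ℂ := A.map (algebraMap ℝ ℂ) with hM
  have hrad : spectralRadius ℂ M < 1 := by
    have h1 : ∀ z ∈ spectrum ℂ M, ‖z‖₊ < (1 : ℝ≥0) := by
      intro z hz
      have := hA z hz
      rwa [← coe_nnnorm, ← NNReal.coe_one, NNReal.coe_lt_coe] at this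
    simpa using spectrum.spectralRadius_lt_of_forall_lt M h1
  have hnorm := tendsto_pow_norm_zero_of_spectralRadius_lt_one M hrad
  have key : ∀ t : ℕ, ‖(A ^ t) i j‖ ≤ ‖M ^ t‖ := by
    intro t
    have hmap : M ^ t = (A ^ t).map (algebraMap ℝ ℂ) := by
      rw [hM, ← RingHom.mapMatrix_apply, ← RingHom.mapMatrix_apply, map_pow]
    have h1 : ‖(M ^ t) i j‖₊ ≤ ‖M ^ t‖₊ := by
      rw [Matrix.linfty_opNNNorm_def]
      exact le_trans
        (Finset.single_le_sum (f := fun k => ‖(M ^ t) i k‖₊) (fun _ _ => zero_le)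
          (Finset.mem_univ j))
        (Finset.le_sup (f := fun i => ∑ j, ‖(M ^ t) i j‖₊) (Finset.mem_univ i))
    have h1' : ‖(M ^ t) i j‖ ≤ ‖M ^ t‖ := h1
    have h2 : ‖(A ^ t) i j‖ = ‖(M ^ t) i j‖ := by
      rw [hmap, Matrix.map_apply]
      simp [Complex.norm_real]
    rw [h2]; exact h1'
  exact squeeze_zero_norm key hnorm
end MP


lemma dot_self_nonneg {n : ℕ} (v : Fin n → ℝ) : 0 ≤ v ⬝ᵥ v :=
  Finset.sum_nonneg fun i _ => mul_self_nonneg _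

lemma quad_vecMulVec {n : ℕ} (a v : Fin n → ℝ) :
    v ⬝ᵥ (Matrix.vecMulVec a a *ᵥ v) = (a ⬝ᵥ v) ^ 2 := by
  simp only [dotProduct, Matrix.mulVec, Matrix.vecMulVec_apply, dotProduct]
  rw [sq, Finset.sum_mul]
  refine Finset.sum_congr rfl fun i _ => ?_
  rw [Finset.mul_sum, Finset.mul_sum]
  exact Finset.sum_congr rfl fun j _ => by ring

lemma quad_gramSum {n : ℕ} (w : ℕ → Fin n → ℝ) (t T : ℕ) (v : Fin n → ℝ) :
    v ⬝ᵥ (gramSum w t T *ᵥ v) = ∑ τ ∈ Finset.Icc t (t + T), (w τ ⬝ᵥ v) ^ 2 := by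
  unfold gramSum
  have hsum : (∑ τ ∈ Finset.Icc t (t + T), Matrix.vecMulVec (w τ) (w τ)) *ᵥ v
      = ∑ τ ∈ Finset.Icc t (t + T), Matrix.vecMulVec (w τ) (w τ) *ᵥ v := by
    ext i
    simp only [Matrix.mulVec, dotProduct, Matrix.sum_apply, Finset.sum_apply, Finset.sum_mul]
    rw [Finset.sum_comm]
  rw [hsum]
  have h2 : v ⬝ᵥ (∑ τ ∈ Finset.Icc t (t + T), Matrix.vecMulVec (w τ) (w τ) *ᵥ v)
      = ∑ τ ∈ Finset.Icc t (t + T), v ⬝ᵥ (Matrix.vecMulVec (w τ) (w τ) *ᵥ v) := by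
    simp only [dotProduct, Finset.sum_apply, Finset.mul_sum]
    exact Finset.sum_comm
  rw [h2]
  exact Finset.sum_congr rfl fun τ _ => quad_vecMulVec _ _

lemma gram_herm_s16 {n : ℕ} (w : ℕ → Fin n → ℝ) (t T : ℕ) (c : ℝ) :
    (gramSum w t T - c • (1 : Matrix (Fin n) (Fin n) ℝ)).IsHermitian := by
  have h1 : (gramSum w t T).IsHermitian := by
    unfold Matrix.IsHermitian gramSum
    ext i j
    simp [Matrix.conjTranspose_apply, Matrix.sum_apply, Matrix.vecMulVec_apply, mul_comm]
  have h2 : (c • (1 : Matrix (Fin n) (Fin n) ℝ)).IsHermitian := by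
    unfold Matrix.IsHermitian
    ext i j
    by_cases h : i = j <;> simp [Matrix.conjTranspose_apply, Matrix.one_apply, h, eq_comm]
  exact h1.sub h2

lemma quad_pe {n : ℕ} {w : ℕ → Fin n → ℝ} {α : ℝ} {T : ℕ}
    (h : ∀ t : ℕ, (gramSum w t T - α • 1).PosSemidef) (t : ℕ) (v : Fin n → ℝ) :
    α * (v ⬝ᵥ v) ≤ ∑ τ ∈ Finset.Icc t (t + T), (w τ ⬝ᵥ v) ^ 2 := by
  have := (h t).dotProduct_mulVec_nonneg v
  rw [Matrix.sub_mulVec, dotProduct_sub, Matrix.smul_mulVec, Matrix.one_mulVec,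
    dotProduct_smul, star_trivial, quad_gramSum, smul_eq_mul] at this
  linarith

lemma isPE_perturb {n : ℕ} {w w' : ℕ → Fin n → ℝ}
    (hd : Tendsto (fun t => (w t - w' t) ⬝ᵥ (w t - w' t)) atTop (𝓝 0))
    (hw : IsPE w) : IsPE w' := by
  obtain ⟨α, hα, T, hT, hPE⟩ := hw
  have hTr : (0 : ℝ) < (T : ℝ) + 1 := by positivity
  have hden : (0 : ℝ) < α / (4 * ((T : ℝ) + 1)) := by positivity
  obtain ⟨N, hN⟩ := eventually_atTop.mp (hd.eventually_lt_const hden)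
  refine ⟨α / 4, by positivity, N + T, by omega, fun t => ?_⟩
  refine Matrix.PosSemidef.of_dotProduct_mulVec_nonneg (gram_herm_s16 _ _ _ _) fun v => ?_
  rw [star_trivial, Matrix.sub_mulVec, dotProduct_sub, Matrix.smul_mulVec,
    Matrix.one_mulVec, dotProduct_smul, quad_gramSum, smul_eq_mul]
  set S := max t N with hS
  have hvv : 0 ≤ v ⬝ᵥ v := dot_self_nonneg v
  -- A1 : restrict to window [S, S+T]
  have hsub : Finset.Icc S (S + T) ⊆ Finset.Icc t (t + (N + T)) := by
    intro τ hτ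
    simp only [Finset.mem_Icc] at hτ ⊢
    omega
  have A1 : ∑ τ ∈ Finset.Icc S (S + T), (w' τ ⬝ᵥ v) ^ 2
      ≤ ∑ τ ∈ Finset.Icc t (t + (N + T)), (w' τ ⬝ᵥ v) ^ 2 :=
    Finset.sum_le_sum_of_subset_of_nonneg hsub fun _ _ _ => sq_nonneg _
  -- A2 : per-term lower bound
  have A2 : ∀ τ ∈ Finset.Icc S (S + T),
      (w τ ⬝ᵥ v) ^ 2 / 2 - ((w τ - w' τ) ⬝ᵥ v) ^ 2 ≤ (w' τ ⬝ᵥ v) ^ 2 := by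
    intro τ _
    have he : (w τ - w' τ) ⬝ᵥ v = w τ ⬝ᵥ v - w' τ ⬝ᵥ v := sub_dotProduct _ _ _
    rw [he]
    nlinarith [sq_nonneg (w τ ⬝ᵥ v - 2 * (w' τ ⬝ᵥ v))]
  -- A3 : PE lower bound on window [S, S+T]
  have A3 : α * (v ⬝ᵥ v) ≤ ∑ τ ∈ Finset.Icc S (S + T), (w τ ⬝ᵥ v) ^ 2 :=
    quad_pe hPE S v
  -- A4 : perturbation bound
  have A4 : ∑ τ ∈ Finset.Icc S (S + T), ((w τ - w' τ) ⬝ᵥ v) ^ 2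
      ≤ α / 4 * (v ⬝ᵥ v) := by
    have hcard : (Finset.Icc S (S + T)).card = T + 1 := by
      rw [Nat.card_Icc]; omega
    have hterm : ∀ τ ∈ Finset.Icc S (S + T),
        ((w τ - w' τ) ⬝ᵥ v) ^ 2 ≤ α / (4 * ((T : ℝ) + 1)) * (v ⬝ᵥ v) := by
      intro τ hτ
      have hτN : N ≤ τ := le_trans (le_max_right t N) (Finset.mem_Icc.mp hτ).1
      have hcs : ((w τ - w' τ) ⬝ᵥ v) ^ 2 ≤ ((w τ - w' τ) ⬝ᵥ (w τ - w' τ)) * (v ⬝ᵥ v) := by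
        simpa only [dotProduct, Pi.sub_apply, ← pow_two] using
          Finset.sum_mul_sq_le_sq_mul_sq Finset.univ (fun x => w τ x - w' τ x) v
      refine hcs.trans (mul_le_mul (hN τ hτN).le le_rfl hvv hden.le)
    calc ∑ τ ∈ Finset.Icc S (S + T), ((w τ - w' τ) ⬝ᵥ v) ^ 2
        ≤ (Finset.Icc S (S + T)).card • (α / (4 * ((T : ℝ) + 1)) * (v ⬝ᵥ v)) :=
          Finset.sum_le_card_nsmul _ _ _ hterm
      _ = ((T : ℝ) + 1) * (α / (4 * ((T : ℝ) + 1)) * (v ⬝ᵥ v)) := by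
          rw [hcard, nsmul_eq_mul]; push_cast; ring
      _ = α / 4 * (v ⬝ᵥ v) := by field_simp
  have A2' : ∑ τ ∈ Finset.Icc S (S + T), ((w τ ⬝ᵥ v) ^ 2 / 2 - ((w τ - w' τ) ⬝ᵥ v) ^ 2)
      ≤ ∑ τ ∈ Finset.Icc S (S + T), (w' τ ⬝ᵥ v) ^ 2 := Finset.sum_le_sum A2
  rw [Finset.sum_sub_distrib] at A2'
  have hhalf : ∑ τ ∈ Finset.Icc S (S + T), (w τ ⬝ᵥ v) ^ 2 / 2
      = (∑ τ ∈ Finset.Icc S (S + T), (w τ ⬝ᵥ v) ^ 2) / 2 := by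
    rw [Finset.sum_div]
  rw [hhalf] at A2'
  linarith


/-- for a Schur system, PE of the state trajectory is independent of the
initial condition. -/
theorem pe_state_initial_condition_independent {n m : ℕ}
    (A : Matrix (Fin n) (Fin n) ℝ) (B : Matrix (Fin n) (Fin m) ℝ) (hA : IsSchur A)
    (u : ℕ → Fin m → ℝ) (hu : ∃ M : ℝ, ∀ t, ‖u t‖ ≤ M)
    (x x' : ℕ → Fin n → ℝ) (x0 x0' : Fin n → ℝ)
    (hx0 : x 0 = x0) (hx0' : x' 0 = x0')
    (hdyn : ∀ t : ℕ, x (t + 1) = A.mulVec (x t) + B.mulVec (u t))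
    (hdyn' : ∀ t : ℕ, x' (t + 1) = A.mulVec (x' t) + B.mulVec (u t)) :
    IsPE x ↔ IsPE x' := by
  have hds : ∀ t : ℕ, x t - x' t = (A ^ t) *ᵥ (x0 - x0') := by
    intro t
    induction t with
    | zero => simp [hx0, hx0', Matrix.one_mulVec]
    | succ t ih =>
      have h1 : x (t + 1) - x' (t + 1) = A *ᵥ (x t - x' t) := by
        rw [hdyn t, hdyn' t, Matrix.mulVec_sub]
        abel
      rw [h1, ih, Matrix.mulVec_mulVec, ← pow_succ']
  have hcoord : ∀ i : Fin n, Filter.Tendsto (fun t => (x t - x' t) i)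
      Filter.atTop (nhds 0) := by
    intro i
    have heq : ∀ t : ℕ, (x t - x' t) i = ∑ j, (A ^ t) i j * (x0 - x0') j := by
      intro t
      rw [hds t]
      rfl
    have hlim : Filter.Tendsto (fun t => ∑ j, (A ^ t) i j * (x0 - x0') j)
        Filter.atTop (nhds 0) := by
      have := Filter.Tendsto.congr (fun t => rfl)
        (tendsto_finset_sum Finset.univ
          (fun j _ => (schur_pow_entry_tendsto A hA i j).mul_const ((x0 - x0') j)))
      simpa using this
    exact hlim.congr fun t => (heq t).symm
  have hdd : Filter.Tendsto (fun t => (x t - x' t) ⬝ᵥ (x t - x' t))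
      Filter.atTop (nhds 0) := by
    have := tendsto_finset_sum (Finset.univ (α := Fin n))
      (fun i _ => (hcoord i).mul (hcoord i))
    simpa [dotProduct] using this
  have hdd' : Filter.Tendsto (fun t => (x' t - x t) ⬝ᵥ (x' t - x t))
      Filter.atTop (nhds 0) := by
    refine hdd.congr fun t => ?_
    have : x t - x' t = -(x' t - x t) := by abel
    rw [this, neg_dotProduct, dotProduct_neg, neg_neg]
  exact ⟨fun h => isPE_perturb hdd h, fun h => isPE_perturb hdd' h⟩
end

section
/- If a bounded signal is a linear image of a signal that persistently spans at most D−1 directions plus arbitrarily small terms, it is not PE: let y : ℕ → ℝ^D be bounded, and suppose for every T ∈ ℕ and ε > 0 there exist t ∈ ℕ, a matrix H ∈ ℝ^{D×(D−1)}, signals λ_τ ∈ ℝ^{D−1}, and e_τ ∈ ℝ^D with |e_τ| ≤ ε, such that y_τ = H λ_τ + e_τ for all τ ∈ {t, …, t+T}. Then y is not persistently exciting. -/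
open Matrix

/-- a bounded signal which, on arbitrarily long windows, is a linear
image of a `(D−1)`-dimensional signal up to arbitrarily small errors, is not PE. -/
theorem not_pe_of_low_rank_approx {D : ℕ} (hD : 0 < D) (y : ℕ → Fin D → ℝ)
    (hbdd : ∃ M : ℝ, ∀ t, ‖y t‖ ≤ M)
    (happrox : ∀ T : ℕ, ∀ ε : ℝ, 0 < ε →
      ∃ t : ℕ, ∃ H : Matrix (Fin D) (Fin (D - 1)) ℝ,
        ∃ lam : ℕ → Fin (D - 1) → ℝ, ∃ e : ℕ → Fin D → ℝ,
          ∀ τ ∈ Finset.Icc t (t + T), ‖e τ‖ ≤ ε ∧ y τ = H.mulVec (lam τ) + e τ) :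
    ¬ IsPE y := by
  rintro ⟨α, hα, T, hT, hpsd⟩
  set ε : ℝ := min 1 (α / (2 * (T + 1) * D)) with hεdef
  have hεpos : 0 < ε := lt_min one_pos (by positivity)
  have hε1 : ε ≤ 1 := min_le_left _ _
  have hε2 : ε ≤ α / (2 * (T + 1) * D) := min_le_right _ _
  obtain ⟨t, H, lam, e, hwin⟩ := happrox T ε hεpos
  -- find a nonzero left-kernel vector z
  have hninj : ¬ Function.Injective (Matrix.vecMulLinear H) := by
    intro hinj
    have hle := LinearMap.finrank_le_finrank_of_injective hinj
    simp [Module.finrank_pi] at hle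
    omega
  obtain ⟨a, b, hab, hne⟩ := Function.not_injective_iff.mp hninj
  set z : Fin D → ℝ := a - b with hzdef
  have hz0 : z ≠ 0 := sub_ne_zero.mpr hne
  have hzH : z ᵥ* H = 0 := by
    have : Matrix.vecMulLinear H z = 0 := by
      rw [hzdef, map_sub, hab, sub_self]
    simpa using this
  have hzznn : 0 ≤ z ⬝ᵥ z := Finset.sum_nonneg fun i _ => mul_self_nonneg (z i)
  have hzz : 0 < z ⬝ᵥ z := by
    rcases lt_or_eq_of_le hzznn with h | h
    · exact h
    · exact absurd (dotProduct_self_eq_zero.mp h.symm) hz0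
  -- on the window, z ⬝ᵥ y τ = z ⬝ᵥ e τ
  have hzy : ∀ τ ∈ Finset.Icc t (t + T), z ⬝ᵥ y τ = z ⬝ᵥ e τ := by
    intro τ hτ
    rw [(hwin τ hτ).2, dotProduct_add, dotProduct_mulVec, hzH, zero_dotProduct, zero_add]
  -- bound |z ⬝ᵥ e τ|
  set S : ℝ := ∑ i, |z i| with hSdef
  have hSnn : 0 ≤ S := Finset.sum_nonneg fun i _ => abs_nonneg _
  have hze : ∀ τ ∈ Finset.Icc t (t + T), |z ⬝ᵥ e τ| ≤ S * ε := by
    intro τ hτ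
    calc |z ⬝ᵥ e τ| ≤ ∑ i, |z i * e τ i| := Finset.abs_sum_le_sum_abs _ _
      _ ≤ ∑ i, |z i| * ε := by
          refine Finset.sum_le_sum fun i _ => ?_
          rw [abs_mul]
          refine mul_le_mul_of_nonneg_left ?_ (abs_nonneg _)
          calc |e τ i| = ‖e τ i‖ := (Real.norm_eq_abs _).symm
            _ ≤ ‖e τ‖ := norm_le_pi_norm (e τ) i
            _ ≤ ε := (hwin τ hτ).1
      _ = S * ε := by rw [hSdef, Finset.sum_mul]
  -- S² ≤ D * (z ⬝ᵥ z)
  have hS2 : S ^ 2 ≤ D * (z ⬝ᵥ z) := by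
    have := sq_sum_le_card_mul_sum_sq (s := Finset.univ) (f := fun i : Fin D => |z i|)
    simpa [hSdef, dotProduct, sq_abs, sq, Finset.card_univ] using this
  -- the PE lower bound
  have hpe := (hpsd t).dotProduct_mulVec_nonneg z
  have hstar : star z = z := by funext i; simp
  rw [hstar, Matrix.sub_mulVec, dotProduct_sub] at hpe
  have hαz : α * (z ⬝ᵥ z) ≤ z ⬝ᵥ (gramSum y t T).mulVec z := by
    have h1 : z ⬝ᵥ ((α • (1 : Matrix (Fin D) (Fin D) ℝ)) *ᵥ z) = α * (z ⬝ᵥ z) := by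
      rw [Matrix.smul_mulVec, Matrix.one_mulVec, dotProduct_smul, smul_eq_mul]
    linarith [hpe, h1.ge, h1.le]
  -- gram quadratic form = sum of squares
  have hquad : z ⬝ᵥ (gramSum y t T).mulVec z
      = ∑ τ ∈ Finset.Icc t (t + T), (z ⬝ᵥ y τ) ^ 2 := by
    unfold gramSum
    simp only [Matrix.mulVec, dotProduct, Matrix.vecMulVec_apply, Finset.sum_apply,
      Matrix.sum_apply, Finset.sum_mul, Finset.mul_sum, sq]
    conv_lhs => enter [2, x]; rw [Finset.sum_comm]
    rw [Finset.sum_comm]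
    refine Finset.sum_congr rfl fun τ _ => ?_
    refine Finset.sum_congr rfl fun i _ => ?_
    refine Finset.sum_congr rfl fun j _ => ?_
    ring
  -- combine
  have hcard : (Finset.Icc t (t + T)).card = T + 1 := by rw [Nat.card_Icc]; omega
  have hsum : ∑ τ ∈ Finset.Icc t (t + T), (z ⬝ᵥ y τ) ^ 2 ≤ (T + 1) * (S * ε) ^ 2 := by
    calc ∑ τ ∈ Finset.Icc t (t + T), (z ⬝ᵥ y τ) ^ 2
        ≤ ∑ _τ ∈ Finset.Icc t (t + T), (S * ε) ^ 2 := by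
          refine Finset.sum_le_sum fun τ hτ => ?_
          rw [hzy τ hτ]
          have h := abs_le.mp (hze τ hτ)
          exact sq_le_sq' h.1 h.2
      _ = (T + 1) * (S * ε) ^ 2 := by
          rw [Finset.sum_const, hcard, nsmul_eq_mul]
          push_cast
          ring
  have hfinal : α * (z ⬝ᵥ z) ≤ (T + 1) * D * (z ⬝ᵥ z) * ε ^ 2 := by
    calc α * (z ⬝ᵥ z) ≤ (T + 1) * (S * ε) ^ 2 := by
          rw [hquad] at hαz; linarith
      _ = (T + 1) * S ^ 2 * ε ^ 2 := by ring
      _ ≤ (T + 1) * (D * (z ⬝ᵥ z)) * ε ^ 2 := by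
          refine mul_le_mul_of_nonneg_right ?_ (sq_nonneg ε)
          exact mul_le_mul_of_nonneg_left hS2 (by positivity)
      _ = (T + 1) * D * (z ⬝ᵥ z) * ε ^ 2 := by ring
  have hα' : α ≤ (T + 1) * D * ε ^ 2 := by
    have h2 : α * (z ⬝ᵥ z) ≤ ((T + 1) * D * ε ^ 2) * (z ⬝ᵥ z) := by linarith [hfinal]
    exact (mul_le_mul_iff_of_pos_right hzz).mp h2
  have hDpos : (0:ℝ) < D := by exact_mod_cast hD
  have hε2' : ε * (2 * (T + 1) * D) ≤ α := (le_div_iff₀ (by positivity)).mp hε2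
  have hεsq : ε ^ 2 ≤ ε := by nlinarith
  have hlast : (T + 1 : ℝ) * D * ε ^ 2 ≤ α / 2 := by
    calc (T + 1 : ℝ) * D * ε ^ 2 ≤ (T + 1) * D * ε := by
          refine mul_le_mul_of_nonneg_left hεsq (by positivity)
      _ = ε * (2 * (T + 1) * D) / 2 := by ring
      _ ≤ α / 2 := by linarith
  linarith
end
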